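/- arXiv:2106.13463 — 3 statements merged into one kernel-verified Lean document; each statement's English description precedes it below -/
import Mathlib

section
/- Fix h > 0 and γ > 0, and for each N ∈ ℕ let (S_k^{(N)}, I_k^{(N)})_{k∈ℕ} be an instance of the discrete stochastic SIR model with total population N and infection parameter λ(N) ≥ 0. Assume N·λ(N) converges to some β ≥ 0 as N → ∞, and that the deterministic initial conditions satisfy S_0^{(N)}/N → s₀ and I_0^{(N)}/N → i₀ with s₀ > 0 and i₀ > 0. Then for every n ∈ ℕ there exist real numbers s_n and i_n such that 𝔼[S_n^{(N)}/N] → s_n and 𝔼[I_n^{(N)}/N] → i_n as N → ∞, and moreover S_n^{(N)}/N → s_n and I_n^{(N)}/N → i_n in probability as N → ∞. -/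
set_option maxHeartbeats 1000000


open MeasureTheory ProbabilityTheory Filter Real

/-- The filtration `𝓕_k = σ((S_j, I_j) : j ≤ k)` generated by the susceptible and infectious
counts up to time `k`. -/
def sirFiltration {Ω : Type*} (S I : ℕ → Ω → ℕ) (k : ℕ) : MeasurableSpace Ω :=
  ⨆ j ∈ Finset.range (k + 1),
    MeasurableSpace.comap (fun ω => (S j ω, I j ω)) inferInstance

/-- The discrete stochastic SIR model on one node with total population `N`, time step `h > 0`
and parameters `λ ≥ 0` (infection), `γ > 0` (recovery).  `S, I, R` are the susceptible,
infectious and recovered counts; `X k i` and `Y k i` are the `{0,1}`-valued infection and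
recovery indicators used in the step from time `k` to `k+1`.  Conditionally on
`𝓕_k = σ((S_j, I_j) : j ≤ k)`, the combined family `(X k i)_i, (Y k i)_i` is independent,
each `X k i` being Bernoulli of parameter `1 - e^{-λ I_k h}` and each `Y k i` Bernoulli of
parameter `1 - e^{-γ h}`; this is expressed by the product form of the conditional
probability of every joint configuration of values.  The initial values are deterministic. -/
def IsSIRModel {Ω : Type*} [MeasurableSpace Ω] (μ : Measure Ω)
    (N : ℕ) (h lam gam : ℝ)
    (S I R : ℕ → Ω → ℕ) (X Y : ℕ → ℕ → Ω → ℕ) : Prop :=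
  IsProbabilityMeasure μ ∧
  0 < h ∧ 0 ≤ lam ∧ 0 < gam ∧
  (∀ k ω, S k ω + I k ω + R k ω = N) ∧
  (∀ k i ω, X k i ω ≤ 1) ∧
  (∀ k i ω, Y k i ω ≤ 1) ∧
  (∀ k, Measurable (S k)) ∧ (∀ k, Measurable (I k)) ∧ (∀ k, Measurable (R k)) ∧
  (∀ k i, Measurable (X k i)) ∧ (∀ k i, Measurable (Y k i)) ∧
  (∀ ω ω', S 0 ω = S 0 ω' ∧ I 0 ω = I 0 ω' ∧ R 0 ω = R 0 ω') ∧
  (∀ k ω, S (k + 1) ω + (∑ i ∈ Finset.range (S k ω), X k i ω) = S k ω) ∧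
  (∀ k ω, I (k + 1) ω + (∑ i ∈ Finset.range (I k ω), Y k i ω)
      = I k ω + ∑ i ∈ Finset.range (S k ω), X k i ω) ∧
  (∀ k ω, R (k + 1) ω = R k ω + ∑ i ∈ Finset.range (I k ω), Y k i ω) ∧
  (∀ k : ℕ, ∀ a b : ℕ → ℕ, (∀ i, a i ≤ 1) → (∀ i, b i ≤ 1) →
    μ[Set.indicator {ω | ∀ i < N, X k i ω = a i ∧ Y k i ω = b i} (fun _ => (1 : ℝ))
        | sirFiltration S I k]
      =ᵐ[μ] fun ω =>
        (∏ i ∈ Finset.range N,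
          (if a i = 1 then 1 - exp (-(lam * (I k ω : ℝ) * h))
            else exp (-(lam * (I k ω : ℝ) * h)))) *
        (∏ i ∈ Finset.range N,
          (if b i = 1 then 1 - exp (-(gam * h)) else exp (-(gam * h)))))


namespace SIRAux
open Finset

def W (x : ℝ) (t A : Finset ℕ) : ℝ := ∏ j ∈ t, if j ∈ A then x else 1 - x

lemma step' (x : ℝ) {a : ℕ} {w : Finset ℕ} (ha : a ∉ w) (F : Finset ℕ → ℝ) :
    ∑ A ∈ (insert a w).powerset, W x (insert a w) A * F A
      = ∑ A ∈ w.powerset, W x w A * ((1 - x) * F A + x * F (insert a A)) := by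
  rw [Finset.powerset_insert, Finset.sum_union, Finset.sum_image]
  · have h1 : ∀ A ∈ w.powerset, W x (insert a w) A * F A = W x w A * ((1-x) * F A) := by
      intro A hA
      have haA : a ∉ A := fun hc => ha (Finset.mem_powerset.mp hA hc)
      rw [W, W, Finset.prod_insert ha, if_neg haA]; ring
    have h2 : ∀ A ∈ w.powerset, W x (insert a w) (insert a A) * F (insert a A)
        = W x w A * (x * F (insert a A)) := by
      intro A hA
      rw [W, W, Finset.prod_insert ha, if_pos (Finset.mem_insert_self a A)]
      have : ∀ j ∈ w, (if j ∈ insert a A then x else 1-x) = (if j ∈ A then x else 1-x) := by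
        intro j hj
        have hja : j ≠ a := fun hc => ha (hc ▸ hj)
        simp [Finset.mem_insert, hja]
      rw [Finset.prod_congr rfl this]; ring
    rw [Finset.sum_congr rfl h1, Finset.sum_congr rfl h2, ← Finset.sum_add_distrib]
    exact Finset.sum_congr rfl fun A hA => by ring
  · intro A hA B hB hAB
    have haA : a ∉ A := fun hc => ha (Finset.mem_powerset.mp hA hc)
    have haB : a ∉ B := fun hc => ha (Finset.mem_powerset.mp hB hc)
    have := congrArg (Finset.erase · a) hAB
    simpa [Finset.erase_insert, haA, haB] using this
  · rw [Finset.disjoint_right]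
    rintro A hA hA'
    obtain ⟨B, hB, rfl⟩ := Finset.mem_image.mp hA
    exact ha (Finset.mem_powerset.mp hA' (Finset.mem_insert_self a B))

lemma M0 (x : ℝ) (u : Finset ℕ) : ∑ A ∈ u.powerset, W x u A = 1 := by
  induction u using Finset.induction_on with
  | empty => simp [W]
  | insert _ _ ha ih =>
    have hst := step' x ha (fun _ => (1:ℝ))
    simp only [mul_one] at hst
    rw [hst]
    simp only [sub_add_cancel, mul_one]
    exact ih

lemma M1 (x : ℝ) (u : Finset ℕ) :
    ∑ A ∈ u.powerset, W x u A * (A.card : ℝ) = u.card * x := by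
  induction u using Finset.induction_on with
  | empty => simp
  | @insert a w ha ih =>
    rw [step' x ha (fun A => (A.card : ℝ))]
    have : ∀ A ∈ w.powerset, W x w A * ((1-x) * (A.card:ℝ) + x * ((insert a A).card : ℝ))
        = W x w A * (A.card:ℝ) + x * W x w A := by
      intro A hA
      have haA : a ∉ A := fun hc => ha (Finset.mem_powerset.mp hA hc)
      rw [Finset.card_insert_of_notMem haA]; push_cast; ring
    rw [Finset.sum_congr rfl this, Finset.sum_add_distrib, ih, ← Finset.mul_sum, M0,
      Finset.card_insert_of_notMem ha]
    push_cast; ring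

lemma M2 (x : ℝ) (u : Finset ℕ) :
    ∑ A ∈ u.powerset, W x u A * (A.card : ℝ)^2
      = u.card * x * (1 - x) + (u.card * x)^2 := by
  induction u using Finset.induction_on with
  | empty => simp
  | @insert a w ha ih =>
    rw [step' x ha (fun A => (A.card : ℝ)^2)]
    have : ∀ A ∈ w.powerset, W x w A * ((1-x) * (A.card:ℝ)^2 + x * ((insert a A).card : ℝ)^2)
        = W x w A * (A.card:ℝ)^2 + x * (2 * (W x w A * (A.card:ℝ)) + W x w A) := by
      intro A hA
      have haA : a ∉ A := fun hc => ha (Finset.mem_powerset.mp hA hc)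
      rw [Finset.card_insert_of_notMem haA]; push_cast; ring
    rw [Finset.sum_congr rfl this, Finset.sum_add_distrib, ih, ← Finset.mul_sum,
      Finset.sum_add_distrib, ← Finset.mul_sum, M1, M0, Finset.card_insert_of_notMem ha]
    push_cast; ring

lemma Mres (x : ℝ) (g : ℕ → ℝ) (d : Finset ℕ) : ∀ u : Finset ℕ, Disjoint u d →
    ∑ A ∈ (u ∪ d).powerset, W x (u ∪ d) A * g ((A ∩ u).card)
      = ∑ A ∈ u.powerset, W x u A * g (A.card) := by
  induction d using Finset.induction_on with
  | empty =>
    intro u _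
    simp only [Finset.union_empty]
    exact Finset.sum_congr rfl fun A hA => by
      rw [Finset.inter_eq_left.mpr (Finset.mem_powerset.mp hA)]
  | @insert a d ha ih =>
    intro u hu
    have hau : a ∉ u := fun hc => (Finset.disjoint_right.mp hu (Finset.mem_insert_self a d)) hc
    have haud : a ∉ u ∪ d := by
      simp [hau, ha]
    rw [Finset.union_insert, step' x haud (fun A => g ((A ∩ u).card))]
    have : ∀ A ∈ (u ∪ d).powerset,
        W x (u ∪ d) A * ((1-x) * g ((A ∩ u).card) + x * g (((insert a A) ∩ u).card))
        = W x (u ∪ d) A * g ((A ∩ u).card) := by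
      intro A hA
      rw [Finset.insert_inter_of_notMem hau]; ring
    rw [Finset.sum_congr rfl this, ih u (Finset.disjoint_insert_right.mp hu).2]

lemma Msq (x d c : ℝ) {u t : Finset ℕ} (hut : u ⊆ t) :
    ∑ A ∈ t.powerset, W x t A * (d + c * ((A ∩ u).card : ℝ))^2
      = (d + c * (u.card * x))^2 + c^2 * (u.card * x * (1 - x)) := by
  have hdisj : Disjoint u (t \ u) := Finset.disjoint_sdiff
  have hts : t = u ∪ (t \ u) := by rw [Finset.union_sdiff_of_subset hut]
  rw [hts, Mres x (fun m => (d + c * (m:ℝ))^2) (t \ u) u hdisj]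
  have : ∀ A ∈ u.powerset, W x u A * (d + c * (A.card:ℝ))^2
      = d^2 * W x u A + (2*d*c) * (W x u A * (A.card:ℝ)) + c^2 * (W x u A * (A.card:ℝ)^2) := by
    intro A _; ring
  rw [Finset.sum_congr rfl this, Finset.sum_add_distrib, Finset.sum_add_distrib,
    ← Finset.mul_sum, ← Finset.mul_sum, ← Finset.mul_sum, M0, M1, M2]
  ring

lemma Mpair (N s i : ℕ) (hs : s ≤ N) (hi : i ≤ N) (x y c₁ c₂ c₃ : ℝ) :
    ∑ A ∈ (range N).powerset, ∑ B ∈ (range N).powerset,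
      W x (range N) A * W y (range N) B *
        (c₁ + c₂ * ((A ∩ range s).card : ℝ) + c₃ * ((B ∩ range i).card : ℝ))^2
      = (c₁ + c₂ * (s * x) + c₃ * (i * y))^2
        + c₂^2 * (s * x * (1 - x)) + c₃^2 * (i * y * (1 - y)) := by
  have hsu : range s ⊆ range N := Finset.range_subset_range.mpr hs
  have hiu : range i ⊆ range N := Finset.range_subset_range.mpr hi
  have inner : ∀ A ∈ (range N).powerset,
      ∑ B ∈ (range N).powerset,
        W x (range N) A * W y (range N) B *
          (c₁ + c₂ * ((A ∩ range s).card : ℝ) + c₃ * ((B ∩ range i).card : ℝ))^2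
      = W x (range N) A *
          (((c₁ + c₂ * ((A ∩ range s).card : ℝ)) + c₃ * (i * y))^2
            + c₃^2 * (i * y * (1 - y))) := by
    intro A _
    have : ∀ B ∈ (range N).powerset,
        W x (range N) A * W y (range N) B *
          (c₁ + c₂ * ((A ∩ range s).card : ℝ) + c₃ * ((B ∩ range i).card : ℝ))^2
        = W x (range N) A *
          (W y (range N) B * ((c₁ + c₂ * ((A ∩ range s).card : ℝ)) + c₃ * ((B ∩ range i).card : ℝ))^2) := by
      intro B _; ring
    rw [Finset.sum_congr rfl this, ← Finset.mul_sum]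
    congr 1
    rw [Msq y (c₁ + c₂ * ((A ∩ range s).card : ℝ)) c₃ hiu, Finset.card_range]
  rw [Finset.sum_congr rfl inner]
  have : ∀ A ∈ (range N).powerset,
      W x (range N) A *
          (((c₁ + c₂ * ((A ∩ range s).card : ℝ)) + c₃ * (i * y))^2 + c₃^2 * (i * y * (1 - y)))
      = W x (range N) A * ((c₁ + c₃ * (i * y)) + c₂ * ((A ∩ range s).card : ℝ))^2
        + (c₃^2 * (i * y * (1 - y))) * W x (range N) A := by
    intro A _; ring
  rw [Finset.sum_congr rfl this, Finset.sum_add_distrib, ← Finset.mul_sum, M0,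
    Msq x (c₁ + c₃ * (i * y)) c₂ hsu, Finset.card_range]
  ring


noncomputable def pI (lam h : ℝ) (i : ℕ) : ℝ := 1 - Real.exp (-(lam * i * h))
noncomputable def qG (gam h : ℝ) : ℝ := 1 - Real.exp (-(gam * h))

variable {Ω : Type*} [m0 : MeasurableSpace Ω] {μ : Measure Ω}
  {N : ℕ} {h lam gam : ℝ} {S I R : ℕ → Ω → ℕ} {X Y : ℕ → ℕ → Ω → ℕ}

def Eset (S I : ℕ → Ω → ℕ) (k s i : ℕ) : Set Ω := {ω | S k ω = s ∧ I k ω = i}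

def Cset (N : ℕ) (X Y : ℕ → ℕ → Ω → ℕ) (k : ℕ) (A B : Finset ℕ) : Set Ω :=
  {ω | ∀ j < N, X k j ω = (if j ∈ A then 1 else 0) ∧ Y k j ω = (if j ∈ B then 1 else 0)}

lemma filt_le (hS : ∀ k, Measurable (S k)) (hI : ∀ k, Measurable (I k)) (k : ℕ) :
    sirFiltration S I k ≤ m0 := by
  refine iSup_le fun j => iSup_le fun _ => ?_
  exact Measurable.comap_le ((hS j).prodMk (hI j))

lemma Eset_meas_filt (k s i : ℕ) :
    MeasurableSet[sirFiltration S I k] (Eset S I k s i) := by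
  have h1 : MeasurableSpace.comap (fun ω => (S k ω, I k ω)) inferInstance
      ≤ sirFiltration S I k :=
    le_iSup_of_le k (le_iSup_of_le (Finset.self_mem_range_succ k) le_rfl)
  apply h1
  refine ⟨{(s, i)}, measurableSet_singleton _, ?_⟩
  ext ω; simp [Eset, Prod.ext_iff]

lemma Cset_meas (hX : ∀ k i, Measurable (X k i)) (hY : ∀ k i, Measurable (Y k i))
    (k : ℕ) (A B : Finset ℕ) : MeasurableSet (Cset N X Y k A B) := by
  have heq : Cset N X Y k A B = ⋂ j ∈ Set.Iio N,
      ({ω | X k j ω = (if j ∈ A then 1 else 0)} ∩ {ω | Y k j ω = (if j ∈ B then 1 else 0)}) := by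
    ext ω; simp [Cset]
  rw [heq]
  refine MeasurableSet.biInter (Set.to_countable _) fun j _ => MeasurableSet.inter ?_ ?_
  · exact hX k j (measurableSet_singleton _)
  · exact hY k j (measurableSet_singleton _)

lemma keyMeas (hm : IsSIRModel μ N h lam gam S I R X Y) (k s i : ℕ) (A B : Finset ℕ) :
    (μ (Eset S I k s i ∩ Cset N X Y k A B)).toReal
      = W (pI lam h i) (range N) A * W (qG gam h) (range N) B
          * (μ (Eset S I k s i)).toReal := by
  obtain ⟨hprob, hh, hlam, hgam, hsum, hX1, hY1, hS, hI, hR, hX, hY, hinit,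
    hSrec, hIrec, hRrec, hcond⟩ := hm
  haveI := hprob
  set a : ℕ → ℕ := fun j => if j ∈ A then 1 else 0 with ha_def
  set b : ℕ → ℕ := fun j => if j ∈ B then 1 else 0 with hb_def
  have ha1 : ∀ j, a j ≤ 1 := fun j => by by_cases hj : j ∈ A <;> simp [a, hj]
  have hb1 : ∀ j, b j ≤ 1 := fun j => by by_cases hj : j ∈ B <;> simp [b, hj]
  have hcond' := hcond k a b ha1 hb1
  have hmle : sirFiltration S I k ≤ m0 := filt_le hS hI k
  have hEf : MeasurableSet[sirFiltration S I k] (Eset S I k s i) := Eset_meas_filt k s i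
  have hEm : MeasurableSet (Eset S I k s i) := hmle _ hEf
  have hCm : MeasurableSet (Cset N X Y k A B) := Cset_meas hX hY k A B
  have hCeq : {ω | ∀ j < N, X k j ω = a j ∧ Y k j ω = b j} = Cset N X Y k A B := rfl
  have hint : Integrable (Set.indicator (Cset N X Y k A B) (fun _ => (1:ℝ))) μ :=
    (integrable_const (1:ℝ)).indicator hCm
  rw [hCeq] at hcond'
  have h1 : ∫ ω in Eset S I k s i,
        (μ[Set.indicator (Cset N X Y k A B) (fun _ => (1:ℝ)) | sirFiltration S I k]) ω ∂μ
      = (μ (Eset S I k s i ∩ Cset N X Y k A B)).toReal := by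
    rw [setIntegral_condExp hmle hint hEf, setIntegral_indicator hCm]
    simp
    rfl
  have h2 : ∫ ω in Eset S I k s i,
        (μ[Set.indicator (Cset N X Y k A B) (fun _ => (1:ℝ)) | sirFiltration S I k]) ω ∂μ
      = ∫ ω in Eset S I k s i,
          ((∏ j ∈ range N, (if a j = 1 then 1 - exp (-(lam * (I k ω : ℝ) * h))
              else exp (-(lam * (I k ω : ℝ) * h)))) *
           (∏ j ∈ range N, (if b j = 1 then 1 - exp (-(gam * h)) else exp (-(gam * h))))) ∂μ :=
    setIntegral_congr_ae hEm (hcond'.mono fun ω hω _ => hω)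
  have h3 : ∀ ω ∈ Eset S I k s i,
      ((∏ j ∈ range N, (if a j = 1 then 1 - exp (-(lam * (I k ω : ℝ) * h))
          else exp (-(lam * (I k ω : ℝ) * h)))) *
       (∏ j ∈ range N, (if b j = 1 then 1 - exp (-(gam * h)) else exp (-(gam * h)))))
      = W (pI lam h i) (range N) A * W (qG gam h) (range N) B := by
    intro ω hω
    have hIω : I k ω = i := hω.2
    rw [hIω]
    congr 1
    · refine Finset.prod_congr rfl fun j _ => ?_
      by_cases hj : j ∈ A
      · simp [a, hj, W, pI]
      · simp [a, hj, W, pI, sub_sub_cancel]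
    · refine Finset.prod_congr rfl fun j _ => ?_
      by_cases hj : j ∈ B
      · simp [b, hj, W, qG]
      · simp [b, hj, W, qG, sub_sub_cancel]
  have h4 : ∫ ω in Eset S I k s i,
        ((∏ j ∈ range N, (if a j = 1 then 1 - exp (-(lam * (I k ω : ℝ) * h))
            else exp (-(lam * (I k ω : ℝ) * h)))) *
         (∏ j ∈ range N, (if b j = 1 then 1 - exp (-(gam * h)) else exp (-(gam * h))))) ∂μ
      = W (pI lam h i) (range N) A * W (qG gam h) (range N) B
          * (μ (Eset S I k s i)).toReal := by
    rw [setIntegral_congr_fun hEm h3, setIntegral_const]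
    rw [smul_eq_mul, measureReal_def]; ring
  rw [← h1, h2, h4]


lemma Cset_fst_eq {ω : Ω} {k : ℕ} {A B : Finset ℕ} (hA : A ⊆ range N)
    (hC : ω ∈ Cset N X Y k A B) :
    A = (range N).filter (fun j => X k j ω = 1) := by
  ext j
  simp only [Finset.mem_filter, Finset.mem_range]
  constructor
  · intro hjA
    have hjN : j < N := Finset.mem_range.mp (hA hjA)
    have := (hC j hjN).1
    rw [if_pos hjA] at this
    exact ⟨hjN, this⟩
  · rintro ⟨hjN, hXj⟩
    by_contra hjA
    have := (hC j hjN).1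
    rw [if_neg hjA] at this
    rw [this] at hXj
    exact absurd hXj (by norm_num)

lemma Cset_snd_eq {ω : Ω} {k : ℕ} {A B : Finset ℕ} (hB : B ⊆ range N)
    (hC : ω ∈ Cset N X Y k A B) :
    B = (range N).filter (fun j => Y k j ω = 1) := by
  ext j
  simp only [Finset.mem_filter, Finset.mem_range]
  constructor
  · intro hjB
    have hjN : j < N := Finset.mem_range.mp (hB hjB)
    have := (hC j hjN).2
    rw [if_pos hjB] at this
    exact ⟨hjN, this⟩
  · rintro ⟨hjN, hYj⟩
    by_contra hjB
    have := (hC j hjN).2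
    rw [if_neg hjB] at this
    rw [this] at hYj
    exact absurd hYj (by norm_num)

lemma mem_Cset_self (hX1 : ∀ k i ω, X k i ω ≤ 1) (hY1 : ∀ k i ω, Y k i ω ≤ 1)
    (k : ℕ) (ω : Ω) :
    ω ∈ Cset N X Y k ((range N).filter (fun j => X k j ω = 1))
        ((range N).filter (fun j => Y k j ω = 1)) := by
  intro j hjN
  constructor
  · rcases Nat.le_one_iff_eq_zero_or_eq_one.mp (hX1 k j ω) with h0 | h1
    · rw [if_neg, h0]
      simp only [Finset.mem_filter]
      rintro ⟨-, hh⟩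
      rw [h0] at hh; exact absurd hh (by norm_num)
    · rw [if_pos, h1]
      exact Finset.mem_filter.mpr ⟨Finset.mem_range.mpr hjN, h1⟩
  · rcases Nat.le_one_iff_eq_zero_or_eq_one.mp (hY1 k j ω) with h0 | h1
    · rw [if_neg, h0]
      simp only [Finset.mem_filter]
      rintro ⟨-, hh⟩
      rw [h0] at hh; exact absurd hh (by norm_num)
    · rw [if_pos, h1]
      exact Finset.mem_filter.mpr ⟨Finset.mem_range.mpr hjN, h1⟩



lemma ML (hm : IsSIRModel μ N h lam gam S I R X Y) (k : ℕ) (Φ : ℕ → ℕ → ℕ → ℕ → ℝ) :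
    ∫ ω, Φ (S k ω) (I k ω) (∑ j ∈ range (S k ω), X k j ω)
        (∑ j ∈ range (I k ω), Y k j ω) ∂μ
      = ∫ ω, (∑ A ∈ (range N).powerset, ∑ B ∈ (range N).powerset,
          W (pI lam h (I k ω)) (range N) A * W (qG gam h) (range N) B *
            Φ (S k ω) (I k ω) ((A ∩ range (S k ω)).card) ((B ∩ range (I k ω)).card)) ∂μ := by
  obtain ⟨hprob, hh, hlam, hgam, hsum, hX1, hY1, hS, hI, hR, hX, hY, hinit,
    hSrec, hIrec, hRrec, hcond⟩ := hm
  haveI := hprob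
  have hSle : ∀ ω, S k ω ≤ N := fun ω => by have := hsum k ω; omega
  have hIle : ∀ ω, I k ω ≤ N := fun ω => by have := hsum k ω; omega
  have hmle : sirFiltration S I k ≤ m0 := filt_le hS hI k
  set T : Finset ((ℕ × ℕ) × Finset ℕ × Finset ℕ) :=
    (range (N+1) ×ˢ range (N+1)) ×ˢ ((range N).powerset ×ˢ (range N).powerset) with hT
  set term : ((ℕ × ℕ) × Finset ℕ × Finset ℕ) → Ω → ℝ := fun q ω =>
    Set.indicator (Eset S I k q.1.1 q.1.2 ∩ Cset N X Y k q.2.1 q.2.2)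
      (fun _ => Φ q.1.1 q.1.2 ((q.2.1 ∩ range q.1.1).card) ((q.2.2 ∩ range q.1.2).card)) ω
    with hterm
  -- Step A : pointwise decomposition of the left integrand
  have stepA : ∀ ω, Φ (S k ω) (I k ω) (∑ j ∈ range (S k ω), X k j ω)
      (∑ j ∈ range (I k ω), Y k j ω) = ∑ q ∈ T, term q ω := by
    intro ω
    set A₀ : Finset ℕ := (range N).filter (fun j => X k j ω = 1) with hA₀
    set B₀ : Finset ℕ := (range N).filter (fun j => Y k j ω = 1) with hB₀
    set q₀ : (ℕ × ℕ) × Finset ℕ × Finset ℕ := ((S k ω, I k ω), (A₀, B₀)) with hq₀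
    have hq₀mem : q₀ ∈ T := by
      refine Finset.mem_product.mpr ⟨Finset.mem_product.mpr ⟨?_, ?_⟩,
        Finset.mem_product.mpr ⟨?_, ?_⟩⟩
      · exact Finset.mem_range.mpr (Nat.lt_succ_of_le (hSle ω))
      · exact Finset.mem_range.mpr (Nat.lt_succ_of_le (hIle ω))
      · exact Finset.mem_powerset.mpr (Finset.filter_subset _ _)
      · exact Finset.mem_powerset.mpr (Finset.filter_subset _ _)
    have hωC : ω ∈ Cset N X Y k A₀ B₀ := mem_Cset_self hX1 hY1 k ω
    rw [Finset.sum_eq_single_of_mem q₀ hq₀mem]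
    · simp only [hterm]
      have hmem : ω ∈ Eset S I k q₀.1.1 q₀.1.2 ∩ Cset N X Y k q₀.2.1 q₀.2.2 :=
        ⟨⟨rfl, rfl⟩, hωC⟩
      rw [Set.indicator_of_mem hmem]
      have hXsum : ∑ j ∈ range (S k ω), X k j ω = (A₀ ∩ range (S k ω)).card := by
        have : ∀ j ∈ range (S k ω), X k j ω = if j ∈ A₀ then 1 else 0 := by
          intro j hj
          have hjN : j < N := lt_of_lt_of_le (Finset.mem_range.mp hj) (hSle ω)
          rcases Nat.le_one_iff_eq_zero_or_eq_one.mp (hX1 k j ω) with h0 | h1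
          · rw [h0, if_neg]
            simp only [hA₀, Finset.mem_filter]
            rintro ⟨-, hc⟩; rw [h0] at hc; exact absurd hc (by norm_num)
          · rw [h1, if_pos]
            exact Finset.mem_filter.mpr ⟨Finset.mem_range.mpr hjN, h1⟩
        rw [Finset.sum_congr rfl this, Finset.sum_boole]
        simp only [Nat.cast_id]
        rw [Finset.filter_mem_eq_inter, Finset.inter_comm]
      have hYsum : ∑ j ∈ range (I k ω), Y k j ω = (B₀ ∩ range (I k ω)).card := by
        have : ∀ j ∈ range (I k ω), Y k j ω = if j ∈ B₀ then 1 else 0 := by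
          intro j hj
          have hjN : j < N := lt_of_lt_of_le (Finset.mem_range.mp hj) (hIle ω)
          rcases Nat.le_one_iff_eq_zero_or_eq_one.mp (hY1 k j ω) with h0 | h1
          · rw [h0, if_neg]
            simp only [hB₀, Finset.mem_filter]
            rintro ⟨-, hc⟩; rw [h0] at hc; exact absurd hc (by norm_num)
          · rw [h1, if_pos]
            exact Finset.mem_filter.mpr ⟨Finset.mem_range.mpr hjN, h1⟩
        rw [Finset.sum_congr rfl this, Finset.sum_boole]
        simp only [Nat.cast_id]
        rw [Finset.filter_mem_eq_inter, Finset.inter_comm]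
      rw [hXsum, hYsum]
    · intro q hq hne
      simp only [hterm]
      apply Set.indicator_of_notMem
      rintro ⟨hE, hC⟩
      apply hne
      obtain ⟨hq1, hq2⟩ := Finset.mem_product.mp hq
      obtain ⟨hqA, hqB⟩ := Finset.mem_product.mp hq2
      have h1 : q.1.1 = S k ω := hE.1.symm
      have h2 : q.1.2 = I k ω := hE.2.symm
      have h3 : q.2.1 = A₀ := Cset_fst_eq (Finset.mem_powerset.mp hqA) hC
      have h4 : q.2.2 = B₀ := Cset_snd_eq (Finset.mem_powerset.mp hqB) hC
      rw [hq₀, ← h1, ← h2, ← h3, ← h4]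
  -- measurability of pieces
  have hECm : ∀ q : (ℕ × ℕ) × Finset ℕ × Finset ℕ,
      MeasurableSet (Eset S I k q.1.1 q.1.2 ∩ Cset N X Y k q.2.1 q.2.2) := fun q =>
    (hmle _ (Eset_meas_filt k q.1.1 q.1.2)).inter (Cset_meas hX hY k q.2.1 q.2.2)
  have hEm : ∀ s i : ℕ, MeasurableSet (Eset S I k s i) := fun s i =>
    hmle _ (Eset_meas_filt k s i)
  -- Step B : integrate the decomposition
  have stepB : ∫ ω, Φ (S k ω) (I k ω) (∑ j ∈ range (S k ω), X k j ω)
      (∑ j ∈ range (I k ω), Y k j ω) ∂μ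
      = ∑ q ∈ T, (W (pI lam h q.1.2) (range N) q.2.1 * W (qG gam h) (range N) q.2.2
          * (μ (Eset S I k q.1.1 q.1.2)).toReal)
          * Φ q.1.1 q.1.2 ((q.2.1 ∩ range q.1.1).card) ((q.2.2 ∩ range q.1.2).card) := by
    rw [integral_congr_ae (Filter.Eventually.of_forall stepA)]
    rw [integral_finset_sum T (fun q _ => (integrable_const _).indicator (hECm q))]
    refine Finset.sum_congr rfl fun q _ => ?_
    rw [show (fun ω => term q ω) = fun ω =>
      Set.indicator (Eset S I k q.1.1 q.1.2 ∩ Cset N X Y k q.2.1 q.2.2)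
      (fun _ => Φ q.1.1 q.1.2 ((q.2.1 ∩ range q.1.1).card) ((q.2.2 ∩ range q.1.2).card)) ω
      from rfl]
    rw [integral_indicator_const _ (hECm q)]
    rw [smul_eq_mul, measureReal_def,
      keyMeas ⟨hprob, hh, hlam, hgam, hsum, hX1, hY1, hS, hI, hR, hX, hY, hinit,
        hSrec, hIrec, hRrec, hcond⟩ k q.1.1 q.1.2 q.2.1 q.2.2]
    try ring
  -- Step C : pointwise decomposition of the right integrand
  have stepC : ∀ ω, (∑ A ∈ (range N).powerset, ∑ B ∈ (range N).powerset,
      W (pI lam h (I k ω)) (range N) A * W (qG gam h) (range N) B *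
        Φ (S k ω) (I k ω) ((A ∩ range (S k ω)).card) ((B ∩ range (I k ω)).card))
      = ∑ si ∈ range (N+1) ×ˢ range (N+1),
          Set.indicator (Eset S I k si.1 si.2)
          (fun _ => ∑ A ∈ (range N).powerset, ∑ B ∈ (range N).powerset,
            W (pI lam h si.2) (range N) A * W (qG gam h) (range N) B *
              Φ si.1 si.2 ((A ∩ range si.1).card) ((B ∩ range si.2).card)) ω := by
    intro ω
    have hmemsi : (S k ω, I k ω) ∈ range (N+1) ×ˢ range (N+1) :=
      Finset.mem_product.mpr ⟨Finset.mem_range.mpr (Nat.lt_succ_of_le (hSle ω)),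
        Finset.mem_range.mpr (Nat.lt_succ_of_le (hIle ω))⟩
    rw [Finset.sum_eq_single_of_mem (S k ω, I k ω) hmemsi]
    · have hmemE : ω ∈ Eset S I k (S k ω) (I k ω) := ⟨rfl, rfl⟩
      rw [Set.indicator_of_mem hmemE]
    · intro si hsi hne
      apply Set.indicator_of_notMem
      rintro ⟨h1, h2⟩
      exact hne (Prod.ext h1.symm h2.symm)
  -- Step D
  have stepD : ∫ ω, (∑ A ∈ (range N).powerset, ∑ B ∈ (range N).powerset,
      W (pI lam h (I k ω)) (range N) A * W (qG gam h) (range N) B *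
        Φ (S k ω) (I k ω) ((A ∩ range (S k ω)).card) ((B ∩ range (I k ω)).card)) ∂μ
      = ∑ si ∈ range (N+1) ×ˢ range (N+1),
          (μ (Eset S I k si.1 si.2)).toReal *
          (∑ A ∈ (range N).powerset, ∑ B ∈ (range N).powerset,
            W (pI lam h si.2) (range N) A * W (qG gam h) (range N) B *
              Φ si.1 si.2 ((A ∩ range si.1).card) ((B ∩ range si.2).card)) := by
    rw [integral_congr_ae (Filter.Eventually.of_forall stepC)]
    rw [integral_finset_sum _ (fun si _ => (integrable_const _).indicator (hEm si.1 si.2))]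
    refine Finset.sum_congr rfl fun si _ => ?_
    rw [integral_indicator_const _ (hEm si.1 si.2), smul_eq_mul, measureReal_def]
  rw [stepB, stepD, hT, Finset.sum_product]
  refine Finset.sum_congr rfl fun si _ => ?_
  rw [Finset.sum_product, Finset.mul_sum]
  refine Finset.sum_congr rfl fun A _ => ?_
  rw [Finset.mul_sum]
  refine Finset.sum_congr rfl fun B _ => ?_
  ring


lemma momS (hm : IsSIRModel μ N h lam gam S I R X Y) (k : ℕ) (σ : ℝ) :
    ∫ ω, ((S (k+1) ω : ℝ)/N - σ)^2 ∂μ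
      = ∫ ω, (((S k ω : ℝ) * (1 - pI lam h (I k ω)) / N - σ)^2
          + (S k ω : ℝ) * pI lam h (I k ω) * (1 - pI lam h (I k ω)) / (N:ℝ)^2) ∂μ := by
  have hsum := hm.2.2.2.2.1
  have hSrec := hm.2.2.2.2.2.2.2.2.2.2.2.2.2.1
  have hcast : ∀ ω, ((S (k+1) ω : ℝ)/N - σ)^2
      = (fun s i u v : ℕ => (((s:ℝ) - (u:ℝ))/(N:ℝ) - σ)^2) (S k ω) (I k ω)
          (∑ j ∈ range (S k ω), X k j ω) (∑ j ∈ range (I k ω), Y k j ω) := by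
    intro ω
    have h1 := hSrec k ω
    have h2 : (S (k+1) ω : ℝ) + (∑ j ∈ range (S k ω), X k j ω : ℕ) = (S k ω : ℝ) := by
      exact_mod_cast congrArg (Nat.cast : ℕ → ℝ) h1
    simp only []
    rw [show (S (k+1) ω : ℝ) = (S k ω : ℝ) - (∑ j ∈ range (S k ω), X k j ω : ℕ) by linarith]
  rw [integral_congr_ae (Filter.Eventually.of_forall hcast),
    ML hm k (fun s i u v : ℕ => (((s:ℝ) - (u:ℝ))/(N:ℝ) - σ)^2)]
  refine integral_congr_ae (Filter.Eventually.of_forall fun ω => ?_)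
  have hs : S k ω ≤ N := by have := hsum k ω; omega
  have hi : I k ω ≤ N := by have := hsum k ω; omega
  set s := S k ω
  set i := I k ω
  set x := pI lam h i with hx
  have hrw : ∀ A ∈ (range N).powerset, ∀ B ∈ (range N).powerset,
      W x (range N) A * W (qG gam h) (range N) B *
        (((s:ℝ) - ((A ∩ range s).card:ℝ))/(N:ℝ) - σ)^2
      = W x (range N) A * W (qG gam h) (range N) B *
        (((s:ℝ)/(N:ℝ) - σ) + (-(1:ℝ)/(N:ℝ)) * ((A ∩ range s).card:ℝ)
          + (0:ℝ) * ((B ∩ range i).card:ℝ))^2 := by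
    intro A _ B _; ring
  calc ∑ A ∈ (range N).powerset, ∑ B ∈ (range N).powerset,
        W x (range N) A * W (qG gam h) (range N) B *
          (((s:ℝ) - ((A ∩ range s).card:ℝ))/(N:ℝ) - σ)^2
      = ∑ A ∈ (range N).powerset, ∑ B ∈ (range N).powerset,
        W x (range N) A * W (qG gam h) (range N) B *
          (((s:ℝ)/(N:ℝ) - σ) + (-(1:ℝ)/(N:ℝ)) * ((A ∩ range s).card:ℝ)
            + (0:ℝ) * ((B ∩ range i).card:ℝ))^2 := by
        refine Finset.sum_congr rfl fun A hA => Finset.sum_congr rfl fun B hB => hrw A hA B hB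
    _ = (((s:ℝ)/(N:ℝ) - σ) + (-(1:ℝ)/(N:ℝ)) * ((s:ℝ) * x) + (0:ℝ) * ((i:ℝ) * qG gam h))^2
          + (-(1:ℝ)/(N:ℝ))^2 * ((s:ℝ) * x * (1 - x)) + (0:ℝ)^2 * ((i:ℝ) * qG gam h * (1 - qG gam h)) :=
        Mpair N s i hs hi x (qG gam h) _ _ _
    _ = ((s:ℝ) * (1 - x) / (N:ℝ) - σ)^2 + (s:ℝ) * x * (1 - x) / (N:ℝ)^2 := by ring

lemma momI (hm : IsSIRModel μ N h lam gam S I R X Y) (k : ℕ) (τ : ℝ) :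
    ∫ ω, ((I (k+1) ω : ℝ)/N - τ)^2 ∂μ
      = ∫ ω, (((I k ω : ℝ) * (1 - qG gam h) / N + (S k ω : ℝ) * pI lam h (I k ω) / N - τ)^2
          + ((S k ω : ℝ) * pI lam h (I k ω) * (1 - pI lam h (I k ω))
             + (I k ω : ℝ) * qG gam h * (1 - qG gam h)) / (N:ℝ)^2) ∂μ := by
  have hsum := hm.2.2.2.2.1
  have hIrec := hm.2.2.2.2.2.2.2.2.2.2.2.2.2.2.1
  have hcast : ∀ ω, ((I (k+1) ω : ℝ)/N - τ)^2
      = (fun s i u v : ℕ => (((i:ℝ) + (u:ℝ) - (v:ℝ))/(N:ℝ) - τ)^2) (S k ω) (I k ω)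
          (∑ j ∈ range (S k ω), X k j ω) (∑ j ∈ range (I k ω), Y k j ω) := by
    intro ω
    have h1 := hIrec k ω
    have h2 : (I (k+1) ω : ℝ) + (∑ j ∈ range (I k ω), Y k j ω : ℕ)
        = (I k ω : ℝ) + (∑ j ∈ range (S k ω), X k j ω : ℕ) := by
      exact_mod_cast congrArg (Nat.cast : ℕ → ℝ) h1
    simp only []
    rw [show (I (k+1) ω : ℝ) = (I k ω : ℝ) + (∑ j ∈ range (S k ω), X k j ω : ℕ)
        - (∑ j ∈ range (I k ω), Y k j ω : ℕ) by linarith]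
  rw [integral_congr_ae (Filter.Eventually.of_forall hcast),
    ML hm k (fun s i u v : ℕ => (((i:ℝ) + (u:ℝ) - (v:ℝ))/(N:ℝ) - τ)^2)]
  refine integral_congr_ae (Filter.Eventually.of_forall fun ω => ?_)
  have hs : S k ω ≤ N := by have := hsum k ω; omega
  have hi : I k ω ≤ N := by have := hsum k ω; omega
  set s := S k ω
  set i := I k ω
  set x := pI lam h i with hx
  set y := qG gam h with hy
  have hrw : ∀ A ∈ (range N).powerset, ∀ B ∈ (range N).powerset,
      W x (range N) A * W y (range N) B *
        (((i:ℝ) + ((A ∩ range s).card:ℝ) - ((B ∩ range i).card:ℝ))/(N:ℝ) - τ)^2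
      = W x (range N) A * W y (range N) B *
        (((i:ℝ)/(N:ℝ) - τ) + ((1:ℝ)/(N:ℝ)) * ((A ∩ range s).card:ℝ)
          + (-(1:ℝ)/(N:ℝ)) * ((B ∩ range i).card:ℝ))^2 := by
    intro A _ B _; ring
  calc ∑ A ∈ (range N).powerset, ∑ B ∈ (range N).powerset,
        W x (range N) A * W y (range N) B *
          (((i:ℝ) + ((A ∩ range s).card:ℝ) - ((B ∩ range i).card:ℝ))/(N:ℝ) - τ)^2
      = ∑ A ∈ (range N).powerset, ∑ B ∈ (range N).powerset,
        W x (range N) A * W y (range N) B *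
          (((i:ℝ)/(N:ℝ) - τ) + ((1:ℝ)/(N:ℝ)) * ((A ∩ range s).card:ℝ)
            + (-(1:ℝ)/(N:ℝ)) * ((B ∩ range i).card:ℝ))^2 := by
        refine Finset.sum_congr rfl fun A hA => Finset.sum_congr rfl fun B hB => hrw A hA B hB
    _ = (((i:ℝ)/(N:ℝ) - τ) + ((1:ℝ)/(N:ℝ)) * ((s:ℝ) * x) + (-(1:ℝ)/(N:ℝ)) * ((i:ℝ) * y))^2
          + ((1:ℝ)/(N:ℝ))^2 * ((s:ℝ) * x * (1 - x)) + (-(1:ℝ)/(N:ℝ))^2 * ((i:ℝ) * y * (1 - y)) :=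
        Mpair N s i hs hi x y _ _ _
    _ = ((i:ℝ) * (1 - y) / (N:ℝ) + (s:ℝ) * x / (N:ℝ) - τ)^2
          + ((s:ℝ) * x * (1 - x) + (i:ℝ) * y * (1 - y)) / (N:ℝ)^2 := by ring


lemma exp_lip {x y : ℝ} (hx : 0 ≤ x) (hy : 0 ≤ y) :
    |Real.exp (-x) - Real.exp (-y)| ≤ |x - y| := by
  have key : ∀ u v : ℝ, 0 ≤ u → u ≤ v → Real.exp (-u) - Real.exp (-v) ≤ v - u := by
    intro u v hu huv
    have h1 : Real.exp (-u) - Real.exp (-v) = Real.exp (-u) * (1 - Real.exp (-(v - u))) := by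
      rw [mul_sub, mul_one, ← Real.exp_add]; ring_nf
    have h2 : Real.exp (-u) ≤ 1 := Real.exp_le_one_iff.mpr (by linarith)
    have h3 : 0 ≤ 1 - Real.exp (-(v - u)) := by
      have := Real.exp_le_one_iff.mpr (show -(v-u) ≤ 0 by linarith); linarith
    have h4 : 1 - Real.exp (-(v - u)) ≤ v - u := by
      have := Real.add_one_le_exp (-(v - u)); linarith
    calc Real.exp (-u) - Real.exp (-v) = Real.exp (-u) * (1 - Real.exp (-(v-u))) := h1
      _ ≤ 1 * (1 - Real.exp (-(v-u))) := mul_le_mul_of_nonneg_right h2 h3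
      _ = 1 - Real.exp (-(v-u)) := one_mul _
      _ ≤ v - u := h4
  rcases le_total x y with hxy | hxy
  · have h1 := key x y hx hxy
    have h2 : Real.exp (-y) ≤ Real.exp (-x) := Real.exp_le_exp.mpr (by linarith)
    rw [abs_of_nonneg (by linarith), abs_of_nonpos (by linarith)]
    linarith
  · have h1 := key y x hy hxy
    have h2 : Real.exp (-x) ≤ Real.exp (-y) := Real.exp_le_exp.mpr (by linarith)
    rw [abs_of_nonpos (by linarith), abs_of_nonneg (by linarith)]
    linarith


lemma pI_mem {lam h : ℝ} (hlam : 0 ≤ lam) (hh : 0 < h) (i : ℕ) :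
    0 ≤ pI lam h i ∧ pI lam h i ≤ 1 := by
  have hx : (0:ℝ) ≤ lam * (i:ℝ) * h := by positivity
  have h1 : Real.exp (-(lam * (i:ℝ) * h)) ≤ 1 := Real.exp_le_one_iff.mpr (by linarith)
  have h2 : (0:ℝ) < Real.exp (-(lam * (i:ℝ) * h)) := Real.exp_pos _
  rw [pI]; constructor <;> linarith

lemma qG_mem {gam h : ℝ} (hgam : 0 < gam) (hh : 0 < h) :
    0 ≤ qG gam h ∧ qG gam h ≤ 1 := by
  have hx : (0:ℝ) ≤ gam * h := by positivity
  have h1 : Real.exp (-(gam * h)) ≤ 1 := Real.exp_le_one_iff.mpr (by linarith)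
  have h2 : (0:ℝ) < Real.exp (-(gam * h)) := Real.exp_pos _
  rw [qG]; constructor <;> linarith

/-- The pointwise mean-distance estimate.  `Dm` is the distance between the conditional mean
and the deterministic target exponent. -/
lemma exp_factor_bound {h β lam : ℝ} (hh : 0 < h) (hβ : 0 ≤ β) (hlam : 0 ≤ lam)
    {N i : ℕ} (hN : 1 ≤ N) (hi : i ≤ N) {in' : ℝ} (hin : 0 ≤ in') :
    |Real.exp (-(lam * (i:ℝ) * h)) - Real.exp (-(β * h * in'))|
      ≤ h * |(N:ℝ) * lam - β| + h * β * |(i:ℝ)/N - in'| := by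
  have hNr : (0:ℝ) < N := by exact_mod_cast hN
  have h1 : |Real.exp (-(lam * (i:ℝ) * h)) - Real.exp (-(β * h * in'))|
      ≤ |lam * (i:ℝ) * h - β * h * in'| :=
    exp_lip (by positivity) (by positivity)
  have h2 : lam * (i:ℝ) * h - β * h * in'
      = h * (((N:ℝ) * lam - β) * ((i:ℝ)/N) + β * ((i:ℝ)/N - in')) := by
    field_simp
    ring
  have hiN0 : (0:ℝ) ≤ (i:ℝ)/N := by positivity
  have hiN1 : (i:ℝ)/N ≤ 1 := by
    rw [div_le_one hNr]; exact_mod_cast hi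
  have h3 : |lam * (i:ℝ) * h - β * h * in'|
      ≤ h * (|(N:ℝ) * lam - β| * ((i:ℝ)/N) + β * |(i:ℝ)/N - in'|) := by
    rw [h2, abs_mul, abs_of_pos hh]
    refine mul_le_mul_of_nonneg_left ?_ (le_of_lt hh)
    calc |((N:ℝ) * lam - β) * ((i:ℝ)/N) + β * ((i:ℝ)/N - in')|
        ≤ |((N:ℝ) * lam - β) * ((i:ℝ)/N)| + |β * ((i:ℝ)/N - in')| := abs_add_le _ _
      _ = |(N:ℝ) * lam - β| * ((i:ℝ)/N) + β * |(i:ℝ)/N - in'| := by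
          rw [abs_mul, abs_mul, abs_of_nonneg hiN0, abs_of_nonneg hβ]
  have h4 : |(N:ℝ) * lam - β| * ((i:ℝ)/N) ≤ |(N:ℝ) * lam - β| * 1 :=
    mul_le_mul_of_nonneg_left hiN1 (abs_nonneg _)
  calc |Real.exp (-(lam * (i:ℝ) * h)) - Real.exp (-(β * h * in'))|
      ≤ |lam * (i:ℝ) * h - β * h * in'| := h1
    _ ≤ h * (|(N:ℝ) * lam - β| * ((i:ℝ)/N) + β * |(i:ℝ)/N - in'|) := h3
    _ ≤ h * (|(N:ℝ) * lam - β| * 1 + β * |(i:ℝ)/N - in'|) := by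
        refine mul_le_mul_of_nonneg_left ?_ (le_of_lt hh)
        linarith
    _ = h * |(N:ℝ) * lam - β| + h * β * |(i:ℝ)/N - in'| := by ring

lemma pointwise_S {h β lam : ℝ} (hh : 0 < h) (hβ : 0 ≤ β) (hlam : 0 ≤ lam)
    {N s i : ℕ} (hN : 1 ≤ N) (hs : s ≤ N) (hi : i ≤ N)
    {sn in' : ℝ} (hsn : 0 ≤ sn) (hin : 0 ≤ in') :
    ((s:ℝ) * (1 - pI lam h i) / N - sn * Real.exp (-(β * h * in')))^2
        + (s:ℝ) * pI lam h i * (1 - pI lam h i) / (N:ℝ)^2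
      ≤ 3*((s:ℝ)/N - sn)^2 + 3*(sn*h*((N:ℝ)*lam - β))^2
        + 3*(sn*h*β)^2*((i:ℝ)/N - in')^2 + 1/(4*(N:ℝ)) := by
  have hNr : (0:ℝ) < N := by exact_mod_cast hN
  obtain ⟨hp0, hp1⟩ := pI_mem hlam hh i
  set p := pI lam h i with hp
  have hEq : 1 - p = Real.exp (-(lam * (i:ℝ) * h)) := by rw [hp, pI]; ring
  set E := Real.exp (-(lam * (i:ℝ) * h)) with hE
  set E' := Real.exp (-(β * h * in')) with hE'
  set a1 := |(s:ℝ)/N - sn| with ha1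
  set a2 := sn * (h * |(N:ℝ)*lam - β|) with ha2
  set a3 := sn * (h * β * |(i:ℝ)/N - in'|) with ha3
  have hEle : E ≤ 1 := by
    rw [hE]
    refine Real.exp_le_one_iff.mpr ?_
    have : (0:ℝ) ≤ lam * (i:ℝ) * h := by positivity
    linarith
  have ha1nn : 0 ≤ a1 := abs_nonneg _
  have ha2nn : 0 ≤ a2 := by rw [ha2]; positivity
  have ha3nn : 0 ≤ a3 := by rw [ha3]; positivity
  have hEnn : 0 ≤ E := le_of_lt (Real.exp_pos _)
  have hD : |(s:ℝ)*E/N - sn*E'| ≤ a1 + a2 + a3 := by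
    have hsplit : (s:ℝ)*E/N - sn*E' = ((s:ℝ)/N - sn)*E + sn*(E - E') := by ring
    have hexpb := exp_factor_bound hh hβ hlam hN hi hin
    calc |(s:ℝ)*E/N - sn*E'| = |((s:ℝ)/N - sn)*E + sn*(E - E')| := by rw [hsplit]
      _ ≤ |((s:ℝ)/N - sn)*E| + |sn*(E - E')| := abs_add_le _ _
      _ = a1*E + sn*|E - E'| := by
          rw [abs_mul, abs_mul, abs_of_nonneg hEnn, abs_of_nonneg hsn]
      _ ≤ a1*1 + sn*(h * |(N:ℝ)*lam - β| + h * β * |(i:ℝ)/N - in'|) := by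
          refine add_le_add (mul_le_mul_of_nonneg_left hEle ha1nn) ?_
          exact mul_le_mul_of_nonneg_left hexpb hsn
      _ = a1 + a2 + a3 := by rw [ha2, ha3]; ring
  have hsq1 : ((s:ℝ)*E/N - sn*E')^2 ≤ (a1 + a2 + a3)^2 := by
    have h0 := pow_le_pow_left₀ (abs_nonneg ((s:ℝ)*E/N - sn*E')) hD 2
    rwa [sq_abs] at h0
  have hsq2 : (a1 + a2 + a3)^2 ≤ 3*a1^2 + 3*a2^2 + 3*a3^2 := by
    nlinarith [sq_nonneg (a1 - a2), sq_nonneg (a1 - a3), sq_nonneg (a2 - a3)]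
  have ha1sq : a1^2 = ((s:ℝ)/N - sn)^2 := sq_abs _
  have ha2sq : a2^2 = (sn*h*((N:ℝ)*lam - β))^2 := by
    rw [ha2]
    rw [show sn * (h * |(N:ℝ)*lam - β|) = sn * h * |(N:ℝ)*lam - β| by ring, mul_pow,
      sq_abs, ← mul_pow]
  have ha3sq : a3^2 = (sn*h*β)^2 * ((i:ℝ)/N - in')^2 := by
    rw [ha3]
    rw [show sn * (h * β * |(i:ℝ)/N - in'|) = sn * h * β * |(i:ℝ)/N - in'| by ring, mul_pow,
      sq_abs]
  have hvar : (s:ℝ)*p*(1-p)/(N:ℝ)^2 ≤ 1/(4*(N:ℝ)) := by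
    have hsle : (s:ℝ) ≤ (N:ℝ) := by exact_mod_cast hs
    have hsnn : (0:ℝ) ≤ (s:ℝ) := by positivity
    rw [div_le_div_iff₀ (by positivity) (by positivity)]
    have h14 : p*(1-p) ≤ 1/4 := by nlinarith [sq_nonneg (1 - 2*p)]
    have hkey : (s:ℝ) * (p*(1-p)) ≤ (N:ℝ) * (1/4) :=
      mul_le_mul hsle h14 (mul_nonneg hp0 (by linarith)) (le_of_lt hNr)
    calc (s:ℝ)*p*(1-p)*(4*(N:ℝ)) = ((s:ℝ)*(p*(1-p)))*(4*(N:ℝ)) := by ring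
      _ ≤ ((N:ℝ)*(1/4))*(4*(N:ℝ)) := mul_le_mul_of_nonneg_right hkey (by positivity)
      _ = 1*(N:ℝ)^2 := by ring
  rw [hEq] at hvar ⊢
  linarith [hsq1, hsq2, hvar, ha1sq, ha2sq, ha3sq]

lemma pointwise_I {h β lam gam : ℝ} (hh : 0 < h) (hβ : 0 ≤ β) (hlam : 0 ≤ lam) (hgam : 0 < gam)
    {N s i : ℕ} (hN : 1 ≤ N) (hs : s ≤ N) (hi : i ≤ N)
    {sn in' : ℝ} (hsn : 0 ≤ sn) (hin : 0 ≤ in') :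
    ((i:ℝ) * (1 - qG gam h) / N + (s:ℝ) * pI lam h i / N
        - (in' * Real.exp (-(gam*h)) + sn * (1 - Real.exp (-(β*h*in')))))^2
      + ((s:ℝ) * pI lam h i * (1 - pI lam h i) + (i:ℝ) * qG gam h * (1 - qG gam h)) / (N:ℝ)^2
    ≤ 3*(1 + sn*h*β)^2*((i:ℝ)/N - in')^2 + 3*((s:ℝ)/N - sn)^2
        + 3*(sn*h*((N:ℝ)*lam - β))^2 + 1/(2*(N:ℝ)) := by
  have hNr : (0:ℝ) < N := by exact_mod_cast hN
  obtain ⟨hp0, hp1⟩ := pI_mem hlam hh i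
  obtain ⟨hq0, hq1⟩ := qG_mem hgam hh
  set p := pI lam h i with hp
  set q := qG gam h with hq
  have hqEq : 1 - q = Real.exp (-(gam*h)) := by rw [hq, qG]; ring
  have hpEq : p = 1 - Real.exp (-(lam * (i:ℝ) * h)) := by rw [hp, pI]
  set E := Real.exp (-(lam * (i:ℝ) * h)) with hE
  set E' := Real.exp (-(β * h * in')) with hE'
  set b1 := |(i:ℝ)/N - in'| with hb1
  set a1 := |(s:ℝ)/N - sn| with ha1
  set a2 := sn * (h * |(N:ℝ)*lam - β|) with ha2
  have hb1nn : 0 ≤ b1 := abs_nonneg _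
  have ha1nn : 0 ≤ a1 := abs_nonneg _
  have ha2nn : 0 ≤ a2 := by rw [ha2]; positivity
  have hΔ : |(i:ℝ)*(1-q)/N + (s:ℝ)*p/N - (in' * (1-q) + sn*(1 - E'))|
      ≤ (1 + sn*h*β)*b1 + a1 + a2 := by
    have hsplit : (i:ℝ)*(1-q)/N + (s:ℝ)*p/N - (in' * (1-q) + sn*(1 - E'))
        = ((i:ℝ)/N - in')*(1-q) + ((s:ℝ)/N - sn)*p + sn*(E' - E) := by
      rw [hpEq]; ring
    have hexpb := exp_factor_bound hh hβ hlam hN hi hin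
    have habs : |E' - E| ≤ h * |(N:ℝ)*lam - β| + h * β * b1 := by
      rw [abs_sub_comm]; exact hexpb
    calc |(i:ℝ)*(1-q)/N + (s:ℝ)*p/N - (in' * (1-q) + sn*(1 - E'))|
        = |((i:ℝ)/N - in')*(1-q) + ((s:ℝ)/N - sn)*p + sn*(E' - E)| := by rw [hsplit]
      _ ≤ |((i:ℝ)/N - in')*(1-q) + ((s:ℝ)/N - sn)*p| + |sn*(E' - E)| := abs_add_le _ _
      _ ≤ |((i:ℝ)/N - in')*(1-q)| + |((s:ℝ)/N - sn)*p| + |sn*(E' - E)| := by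
          have := abs_add_le (((i:ℝ)/N - in')*(1-q)) (((s:ℝ)/N - sn)*p)
          linarith
      _ = b1*(1-q) + a1*p + sn*|E' - E| := by
          rw [abs_mul, abs_mul, abs_mul, abs_of_nonneg (by linarith : (0:ℝ) ≤ 1-q),
            abs_of_nonneg hp0, abs_of_nonneg hsn]
      _ ≤ b1*1 + a1*1 + sn*(h * |(N:ℝ)*lam - β| + h * β * b1) := by
          refine add_le_add (add_le_add ?_ ?_) ?_
          · exact mul_le_mul_of_nonneg_left (by linarith) hb1nn
          · exact mul_le_mul_of_nonneg_left hp1 ha1nn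
          · exact mul_le_mul_of_nonneg_left habs hsn
      _ = (1 + sn*h*β)*b1 + a1 + a2 := by rw [ha2]; ring
  have hcoef : 0 ≤ (1 + sn*h*β) := by positivity
  have hsq1 : ((i:ℝ)*(1-q)/N + (s:ℝ)*p/N - (in' * (1-q) + sn*(1 - E')))^2
      ≤ ((1 + sn*h*β)*b1 + a1 + a2)^2 := by
    have h0 := pow_le_pow_left₀
      (abs_nonneg ((i:ℝ)*(1-q)/N + (s:ℝ)*p/N - (in' * (1-q) + sn*(1 - E')))) hΔ 2
    rwa [sq_abs] at h0
  have hsq2 : ((1 + sn*h*β)*b1 + a1 + a2)^2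
      ≤ 3*((1 + sn*h*β)*b1)^2 + 3*a1^2 + 3*a2^2 := by
    nlinarith [sq_nonneg ((1 + sn*h*β)*b1 - a1), sq_nonneg ((1 + sn*h*β)*b1 - a2),
      sq_nonneg (a1 - a2)]
  have hb1sq : ((1 + sn*h*β)*b1)^2 = (1 + sn*h*β)^2 * ((i:ℝ)/N - in')^2 := by
    rw [mul_pow, hb1, sq_abs]
  have ha1sq : a1^2 = ((s:ℝ)/N - sn)^2 := sq_abs _
  have ha2sq : a2^2 = (sn*h*((N:ℝ)*lam - β))^2 := by
    rw [ha2, show sn * (h * |(N:ℝ)*lam - β|) = sn * h * |(N:ℝ)*lam - β| by ring, mul_pow,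
      sq_abs, ← mul_pow]
  have hvar : ((s:ℝ)*p*(1-p) + (i:ℝ)*q*(1-q))/(N:ℝ)^2 ≤ 1/(2*(N:ℝ)) := by
    have hsle : (s:ℝ) ≤ (N:ℝ) := by exact_mod_cast hs
    have hile : (i:ℝ) ≤ (N:ℝ) := by exact_mod_cast hi
    have hsnn : (0:ℝ) ≤ (s:ℝ) := by positivity
    have hinn : (0:ℝ) ≤ (i:ℝ) := by positivity
    rw [div_le_div_iff₀ (by positivity) (by positivity)]
    have h14p : p*(1-p) ≤ 1/4 := by nlinarith [sq_nonneg (1 - 2*p)]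
    have h14q : q*(1-q) ≤ 1/4 := by nlinarith [sq_nonneg (1 - 2*q)]
    have hk1 : (s:ℝ) * (p*(1-p)) ≤ (N:ℝ) * (1/4) :=
      mul_le_mul hsle h14p (mul_nonneg hp0 (by linarith)) (le_of_lt hNr)
    have hk2 : (i:ℝ) * (q*(1-q)) ≤ (N:ℝ) * (1/4) :=
      mul_le_mul hile h14q (mul_nonneg hq0 (by linarith)) (le_of_lt hNr)
    calc ((s:ℝ)*p*(1-p) + (i:ℝ)*q*(1-q))*(2*(N:ℝ))
        = ((s:ℝ)*(p*(1-p)))*(2*(N:ℝ)) + ((i:ℝ)*(q*(1-q)))*(2*(N:ℝ)) := by ring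
      _ ≤ ((N:ℝ)*(1/4))*(2*(N:ℝ)) + ((N:ℝ)*(1/4))*(2*(N:ℝ)) :=
          add_le_add (mul_le_mul_of_nonneg_right hk1 (by positivity))
            (mul_le_mul_of_nonneg_right hk2 (by positivity))
      _ = 1*(N:ℝ)^2 := by ring
  calc ((i:ℝ) * (1 - q) / N + (s:ℝ) * p / N
        - (in' * Real.exp (-(gam*h)) + sn * (1 - Real.exp (-(β*h*in')))))^2
      + ((s:ℝ) * p * (1 - p) + (i:ℝ) * q * (1 - q)) / (N:ℝ)^2
      ≤ ((1 + sn*h*β)*b1 + a1 + a2)^2 + 1/(2*(N:ℝ)) := by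
        rw [← hqEq, ← hE']
        exact add_le_add hsq1 hvar
    _ ≤ 3*((1 + sn*h*β)*b1)^2 + 3*a1^2 + 3*a2^2 + 1/(2*(N:ℝ)) := by linarith
    _ = 3*(1 + sn*h*β)^2*((i:ℝ)/N - in')^2 + 3*((s:ℝ)/N - sn)^2
        + 3*(sn*h*((N:ℝ)*lam - β))^2 + 1/(2*(N:ℝ)) := by
        rw [hb1sq, ha1sq, ha2sq]; ring


lemma sq_comp_bound {v c : ℝ} (h0 : 0 ≤ v) (h1 : v ≤ 1) : (v - c)^2 ≤ (1 + |c|)^2 := by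
  nlinarith [le_abs_self c, neg_abs_le c, abs_nonneg c]

lemma div_mem_unit {s N : ℕ} (hs : s ≤ N) : 0 ≤ (s:ℝ)/(N:ℝ) ∧ (s:ℝ)/(N:ℝ) ≤ 1 := by
  rcases Nat.eq_zero_or_pos N with rfl | hN
  · have : s = 0 := Nat.le_zero.mp hs
    simp [this]
  · have hNr : (0:ℝ) < N := by exact_mod_cast hN
    constructor
    · positivity
    · rw [div_le_one hNr]; exact_mod_cast hs

lemma integrable_comp (hm : IsSIRModel μ N h lam gam S I R X Y) (k : ℕ)
    (F : ℕ → ℕ → ℝ) (C : ℝ) (hC : ∀ s i, s ≤ N → i ≤ N → |F s i| ≤ C) :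
    Integrable (fun ω => F (S k ω) (I k ω)) μ := by
  haveI := hm.1
  have hS := hm.2.2.2.2.2.2.2.1
  have hI := hm.2.2.2.2.2.2.2.2.1
  have hsum := hm.2.2.2.2.1
  have hmeas : Measurable fun ω => F (S k ω) (I k ω) :=
    (measurable_of_countable (fun p : ℕ × ℕ => F p.1 p.2)).comp ((hS k).prodMk (hI k))
  refine (integrable_const C).mono' hmeas.aestronglyMeasurable ?_
  refine Filter.Eventually.of_forall fun ω => ?_
  have hb := hsum k ω
  simpa [Real.norm_eq_abs] using hC (S k ω) (I k ω) (by omega) (by omega)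

noncomputable def detSIR (bh gh s0 i0 : ℝ) : ℕ → ℝ × ℝ
  | 0 => (s0, i0)
  | (n+1) =>
      ((detSIR bh gh s0 i0 n).1 * Real.exp (-(bh * (detSIR bh gh s0 i0 n).2)),
       (detSIR bh gh s0 i0 n).2 * Real.exp (-gh)
         + (detSIR bh gh s0 i0 n).1 * (1 - Real.exp (-(bh * (detSIR bh gh s0 i0 n).2))))

lemma detSIR_nonneg {bh gh s0 i0 : ℝ} (hbh : 0 ≤ bh) (hs0 : 0 ≤ s0) (hi0 : 0 ≤ i0) :
    ∀ n, 0 ≤ (detSIR bh gh s0 i0 n).1 ∧ 0 ≤ (detSIR bh gh s0 i0 n).2 := by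
  intro n
  induction n with
  | zero => exact ⟨hs0, hi0⟩
  | succ n ih =>
    obtain ⟨h1, h2⟩ := ih
    have hx : (0:ℝ) ≤ bh * (detSIR bh gh s0 i0 n).2 := mul_nonneg hbh h2
    have hexp1 : Real.exp (-(bh * (detSIR bh gh s0 i0 n).2)) ≤ 1 :=
      Real.exp_le_one_iff.mpr (by linarith)
    constructor
    · exact mul_nonneg h1 (le_of_lt (Real.exp_pos _))
    · exact add_nonneg (mul_nonneg h2 (le_of_lt (Real.exp_pos _)))
        (mul_nonneg h1 (by linarith))


lemma detSIR_zero (bh gh s0 i0 : ℝ) : detSIR bh gh s0 i0 0 = (s0, i0) := rfl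

lemma detSIR_succ (bh gh s0 i0 : ℝ) (n : ℕ) :
    detSIR bh gh s0 i0 (n+1)
      = ((detSIR bh gh s0 i0 n).1 * Real.exp (-(bh * (detSIR bh gh s0 i0 n).2)),
         (detSIR bh gh s0 i0 n).2 * Real.exp (-gh)
           + (detSIR bh gh s0 i0 n).1 * (1 - Real.exp (-(bh * (detSIR bh gh s0 i0 n).2)))) := rfl

end SIRAux

open SIRAux Finset

/-- Fix `h > 0` and `γ > 0` and, for each population size `N`, an instance of
the discrete stochastic SIR model with infection parameter `λ(N) ≥ 0` such that `N·λ(N) → β ≥ 0`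
and the deterministic initial proportions converge: `𝔼[S₀/N] → s₀ > 0`, `𝔼[I₀/N] → i₀ > 0`.
Then for every `n` there are reals `s_n, i_n` with `𝔼[S_n/N] → s_n`, `𝔼[I_n/N] → i_n`, and
`S_n/N → s_n`, `I_n/N → i_n` in probability, as `N → ∞`. -/
theorem sir_mean_field_convergence
    (h gam : ℝ) (hh : 0 < h) (hgam : 0 < gam)
    (Ω : ℕ → Type) (mΩ : ∀ N, MeasurableSpace (Ω N)) (μ : ∀ N, Measure (Ω N))
    (lam : ℕ → ℝ)
    (S I R : ∀ N, ℕ → Ω N → ℕ) (X Y : ∀ N, ℕ → ℕ → Ω N → ℕ)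
    (hmodel : ∀ N, IsSIRModel (μ N) N h (lam N) gam (S N) (I N) (R N) (X N) (Y N))
    (β : ℝ) (hβ : 0 ≤ β)
    (hNlam : Filter.Tendsto (fun N : ℕ => (N : ℝ) * lam N) Filter.atTop (nhds β))
    (s₀ i₀ : ℝ) (hs₀ : 0 < s₀) (hi₀ : 0 < i₀)
    (hS0 : Filter.Tendsto (fun N : ℕ => ∫ ω, (S N 0 ω : ℝ) / N ∂(μ N))
      Filter.atTop (nhds s₀))
    (hI0 : Filter.Tendsto (fun N : ℕ => ∫ ω, (I N 0 ω : ℝ) / N ∂(μ N))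
      Filter.atTop (nhds i₀)) :
    ∀ n : ℕ, ∃ s_n i_n : ℝ,
      Filter.Tendsto (fun N : ℕ => ∫ ω, (S N n ω : ℝ) / N ∂(μ N))
        Filter.atTop (nhds s_n) ∧
      Filter.Tendsto (fun N : ℕ => ∫ ω, (I N n ω : ℝ) / N ∂(μ N))
        Filter.atTop (nhds i_n) ∧
      (∀ ε : ℝ, 0 < ε →
        Filter.Tendsto (fun N : ℕ => μ N {ω | ε < |(S N n ω : ℝ) / N - s_n|})
          Filter.atTop (nhds 0)) ∧
      (∀ ε : ℝ, 0 < ε →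
        Filter.Tendsto (fun N : ℕ => μ N {ω | ε < |(I N n ω : ℝ) / N - i_n|})
          Filter.atTop (nhds 0)) := by
  classical
  have hprob : ∀ N, IsProbabilityMeasure (μ N) := fun N => (hmodel N).1
  have hsum : ∀ N k ω, S N k ω + I N k ω + R N k ω = N := fun N => (hmodel N).2.2.2.2.1
  have hlamN : ∀ N, 0 ≤ lam N := fun N => (hmodel N).2.2.1
  have hinit : ∀ N ω ω', S N 0 ω = S N 0 ω' ∧ I N 0 ω = I N 0 ω' ∧ R N 0 ω = R N 0 ω' :=
    fun N => (hmodel N).2.2.2.2.2.2.2.2.2.2.2.2.1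
  have hSmeas : ∀ N k, Measurable (S N k) := fun N => (hmodel N).2.2.2.2.2.2.2.1
  have hImeas : ∀ N k, Measurable (I N k) := fun N => (hmodel N).2.2.2.2.2.2.2.2.1
  -- base-case helper
  have base : ∀ (T : ∀ N, ℕ → Ω N → ℕ) (c : ℝ),
      (∀ N ω ω', T N 0 ω = T N 0 ω') →
      Filter.Tendsto (fun N : ℕ => ∫ ω, (T N 0 ω : ℝ)/N ∂(μ N)) Filter.atTop (nhds c) →
      Filter.Tendsto (fun N : ℕ => ∫ ω, ((T N 0 ω : ℝ)/N - c)^2 ∂(μ N))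
        Filter.atTop (nhds 0) := by
    intro T c hconst hc
    have heq : ∀ N : ℕ, ∫ ω, ((T N 0 ω : ℝ)/N - c)^2 ∂(μ N)
        = ((∫ ω, (T N 0 ω : ℝ)/N ∂(μ N)) - c)^2 := by
      intro N
      haveI := hprob N
      rcases isEmpty_or_nonempty (Ω N) with he | hne
      · exfalso
        have h1 : (μ N) Set.univ = 1 := measure_univ
        rw [Set.univ_eq_empty_iff.mpr he, measure_empty] at h1
        exact zero_ne_one h1
      · obtain ⟨ω0⟩ := hne
        have hint : ∫ ω, (T N 0 ω : ℝ)/N ∂(μ N) = (T N 0 ω0 : ℝ)/N := by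
          rw [show (fun ω => (T N 0 ω : ℝ)/(N:ℝ)) = fun _ => (T N 0 ω0 : ℝ)/(N:ℝ) from
            funext fun ω' => by rw [hconst N ω' ω0], integral_const]
          simp
        rw [show (fun ω => ((T N 0 ω : ℝ)/(N:ℝ) - c)^2)
            = fun _ => ((T N 0 ω0 : ℝ)/(N:ℝ) - c)^2 from
          funext fun ω' => by rw [hconst N ω' ω0], integral_const, hint]
        simp
    have hlim : Filter.Tendsto (fun N : ℕ => ((∫ ω, (T N 0 ω : ℝ)/N ∂(μ N)) - c)^2)
        Filter.atTop (nhds 0) := by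
      have h1 : Filter.Tendsto (fun N : ℕ => (∫ ω, (T N 0 ω : ℝ)/N ∂(μ N)) - c)
          Filter.atTop (nhds 0) := by
        simpa using hc.sub (tendsto_const_nhds (x := c))
      simpa using h1.pow 2
    exact Filter.Tendsto.congr (fun N => (heq N).symm) hlim
  -- the main induction: L² convergence to the deterministic system
  have key : ∀ n : ℕ,
      Filter.Tendsto (fun N : ℕ =>
          ∫ ω, ((S N n ω : ℝ)/N - (detSIR (β*h) (gam*h) s₀ i₀ n).1)^2 ∂(μ N))
        Filter.atTop (nhds 0) ∧
      Filter.Tendsto (fun N : ℕ =>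
          ∫ ω, ((I N n ω : ℝ)/N - (detSIR (β*h) (gam*h) s₀ i₀ n).2)^2 ∂(μ N))
        Filter.atTop (nhds 0) := by
    intro n
    induction n with
    | zero =>
      rw [detSIR_zero]
      exact ⟨base S s₀ (fun N ω ω' => (hinit N ω ω').1) hS0,
        base I i₀ (fun N ω ω' => (hinit N ω ω').2.1) hI0⟩
    | succ n ih =>
      obtain ⟨ihS, ihI⟩ := ih
      rw [detSIR_succ]
      set sn := (detSIR (β*h) (gam*h) s₀ i₀ n).1 with hsn_def
      set inn := (detSIR (β*h) (gam*h) s₀ i₀ n).2 with hinn_def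
      obtain ⟨hsn0, hinn0⟩ := detSIR_nonneg (by positivity : (0:ℝ) ≤ β*h) hs₀.le hi₀.le n
      have hz : Filter.Tendsto (fun N : ℕ => (N:ℝ)*lam N - β) Filter.atTop (nhds 0) := by
        simpa using hNlam.sub (tendsto_const_nhds (x := β))
      have hz2 : Filter.Tendsto (fun N : ℕ => 3*(sn*h*((N:ℝ)*lam N - β))^2)
          Filter.atTop (nhds 0) := by
        have h1 := ((hz.const_mul (sn*h)).pow 2).const_mul 3
        simpa using h1
      have hquart : Filter.Tendsto (fun N : ℕ => 1/(4*(N:ℝ))) Filter.atTop (nhds 0) := by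
        have h1 := tendsto_one_div_atTop_nhds_zero_nat.const_mul (1/4 : ℝ)
        simp only [mul_zero] at h1
        refine h1.congr fun N => ?_
        rw [div_mul_div_comm, one_mul]
      have hhalf : Filter.Tendsto (fun N : ℕ => 1/(2*(N:ℝ))) Filter.atTop (nhds 0) := by
        have h1 := tendsto_one_div_atTop_nhds_zero_nat.const_mul (1/2 : ℝ)
        simp only [mul_zero] at h1
        refine h1.congr fun N => ?_
        rw [div_mul_div_comm, one_mul]
      -- integrability of the two quadratic deviation functions
      have intS : ∀ N : ℕ, Integrable (fun ω => ((S N n ω : ℝ)/N - sn)^2) (μ N) := by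
        intro N
        refine integrable_comp (hmodel N) n (fun s i => ((s:ℝ)/(N:ℝ) - sn)^2)
          ((1 + |sn|)^2) (fun s i hs hi => ?_)
        obtain ⟨h0, h1⟩ := div_mem_unit hs
        rw [abs_of_nonneg (sq_nonneg _)]
        exact sq_comp_bound h0 h1
      have intI : ∀ N : ℕ, Integrable (fun ω => ((I N n ω : ℝ)/N - inn)^2) (μ N) := by
        intro N
        refine integrable_comp (hmodel N) n (fun s i => ((i:ℝ)/(N:ℝ) - inn)^2)
          ((1 + |inn|)^2) (fun s i hs hi => ?_)
        obtain ⟨h0, h1⟩ := div_mem_unit hi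
        rw [abs_of_nonneg (sq_nonneg _)]
        exact sq_comp_bound h0 h1
      have lower : ∀ (c : ℝ) (T : ∀ N, ℕ → Ω N → ℕ), ∀ᶠ N : ℕ in Filter.atTop,
          (0:ℝ) ≤ ∫ ω, ((T N (n+1) ω : ℝ)/N - c)^2 ∂(μ N) :=
        fun c T => Filter.Eventually.of_forall fun N =>
          integral_nonneg fun ω => sq_nonneg _
      constructor
      · -- convergence for S
        set σ := sn * Real.exp (-(β*h*inn)) with hσ_def
        have hub : ∀ᶠ N : ℕ in Filter.atTop,
            ∫ ω, ((S N (n+1) ω : ℝ)/N - σ)^2 ∂(μ N)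
              ≤ 3*(∫ ω, ((S N n ω : ℝ)/N - sn)^2 ∂(μ N))
                + 3*(sn*h*((N:ℝ)*lam N - β))^2
                + 3*(sn*h*β)^2*(∫ ω, ((I N n ω : ℝ)/N - inn)^2 ∂(μ N))
                + 1/(4*(N:ℝ)) := by
          filter_upwards [Filter.eventually_ge_atTop 1] with N hN1
          haveI := hprob N
          rw [momS (hmodel N) n σ]
          have hle : ∀ ω, ((S N n ω : ℝ) * (1 - pI (lam N) h (I N n ω)) / N - σ)^2
                + (S N n ω : ℝ) * pI (lam N) h (I N n ω) * (1 - pI (lam N) h (I N n ω))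
                    / (N:ℝ)^2
              ≤ 3*((S N n ω : ℝ)/N - sn)^2 + 3*(sn*h*((N:ℝ)*lam N - β))^2
                + 3*(sn*h*β)^2*((I N n ω : ℝ)/N - inn)^2 + 1/(4*(N:ℝ)) := by
            intro ω
            have hs : S N n ω ≤ N := by have := hsum N n ω; omega
            have hi : I N n ω ≤ N := by have := hsum N n ω; omega
            rw [hσ_def]
            exact pointwise_S hh hβ (hlamN N) hN1 hs hi hsn0 hinn0
          have hGint : Integrable (fun ω =>
              3*((S N n ω : ℝ)/N - sn)^2 + 3*(sn*h*((N:ℝ)*lam N - β))^2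
                + 3*(sn*h*β)^2*((I N n ω : ℝ)/N - inn)^2 + 1/(4*(N:ℝ))) (μ N) :=
            ((((intS N).const_mul 3).add (integrable_const _)).add
              ((intI N).const_mul _)).add (integrable_const _)
          have hnn : 0 ≤ᵐ[μ N] fun ω =>
              ((S N n ω : ℝ) * (1 - pI (lam N) h (I N n ω)) / N - σ)^2
                + (S N n ω : ℝ) * pI (lam N) h (I N n ω) * (1 - pI (lam N) h (I N n ω))
                    / (N:ℝ)^2 := by
            refine Filter.Eventually.of_forall fun ω => ?_
            simp only [Pi.zero_apply]
            obtain ⟨hp0, hp1⟩ := pI_mem (hlamN N) hh (I N n ω)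
            have : (0:ℝ) ≤ (S N n ω : ℝ) * pI (lam N) h (I N n ω)
                * (1 - pI (lam N) h (I N n ω)) / (N:ℝ)^2 := by
              apply div_nonneg _ (by positivity)
              exact mul_nonneg (mul_nonneg (by positivity) hp0) (by linarith)
            have h2 := sq_nonneg ((S N n ω : ℝ) * (1 - pI (lam N) h (I N n ω)) / N - σ)
            linarith
          have i1 : Integrable (fun ω => 3*((S N n ω : ℝ)/N - sn)^2) (μ N) :=
            (intS N).const_mul 3
          have i2 : Integrable (fun _ : Ω N => 3*(sn*h*((N:ℝ)*lam N - β))^2) (μ N) :=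
            integrable_const _
          have i3 : Integrable (fun ω => 3*(sn*h*β)^2*((I N n ω : ℝ)/N - inn)^2) (μ N) :=
            (intI N).const_mul _
          have i4 : Integrable (fun _ : Ω N => 1/(4*(N:ℝ))) (μ N) := integrable_const _
          have i12 : Integrable (fun ω => 3*((S N n ω : ℝ)/N - sn)^2
              + 3*(sn*h*((N:ℝ)*lam N - β))^2) (μ N) := i1.add i2
          have i123 : Integrable (fun ω => 3*((S N n ω : ℝ)/N - sn)^2
              + 3*(sn*h*((N:ℝ)*lam N - β))^2
              + 3*(sn*h*β)^2*((I N n ω : ℝ)/N - inn)^2) (μ N) := i12.add i3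
          refine le_trans (integral_mono_of_nonneg hnn hGint
            (Filter.Eventually.of_forall hle)) (le_of_eq ?_)
          rw [integral_add i123 i4, integral_add i12 i3, integral_add i1 i2]
          simp [integral_const_mul]
        have hBS : Filter.Tendsto (fun N : ℕ =>
            3*(∫ ω, ((S N n ω : ℝ)/N - sn)^2 ∂(μ N))
              + 3*(sn*h*((N:ℝ)*lam N - β))^2
              + 3*(sn*h*β)^2*(∫ ω, ((I N n ω : ℝ)/N - inn)^2 ∂(μ N))
              + 1/(4*(N:ℝ))) Filter.atTop (nhds 0) := by
          have h1 := ((ihS.const_mul 3).add hz2).add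
            ((ihI.const_mul (3*(sn*h*β)^2)).add hquart)
          simp only [mul_zero, add_zero, zero_add] at h1
          refine h1.congr fun N => by ring
        exact tendsto_of_tendsto_of_tendsto_of_le_of_le' tendsto_const_nhds hBS
          (lower σ S) hub
      · -- convergence for I
        set τ := inn * Real.exp (-(gam*h)) + sn * (1 - Real.exp (-(β*h*inn))) with hτ_def
        have hub : ∀ᶠ N : ℕ in Filter.atTop,
            ∫ ω, ((I N (n+1) ω : ℝ)/N - τ)^2 ∂(μ N)
              ≤ 3*(1 + sn*h*β)^2*(∫ ω, ((I N n ω : ℝ)/N - inn)^2 ∂(μ N))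
                + 3*(∫ ω, ((S N n ω : ℝ)/N - sn)^2 ∂(μ N))
                + 3*(sn*h*((N:ℝ)*lam N - β))^2
                + 1/(2*(N:ℝ)) := by
          filter_upwards [Filter.eventually_ge_atTop 1] with N hN1
          haveI := hprob N
          rw [momI (hmodel N) n τ]
          have hle : ∀ ω, ((I N n ω : ℝ) * (1 - qG gam h) / N
                + (S N n ω : ℝ) * pI (lam N) h (I N n ω) / N - τ)^2
                + ((S N n ω : ℝ) * pI (lam N) h (I N n ω) * (1 - pI (lam N) h (I N n ω))
                   + (I N n ω : ℝ) * qG gam h * (1 - qG gam h)) / (N:ℝ)^2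
              ≤ 3*(1 + sn*h*β)^2*((I N n ω : ℝ)/N - inn)^2 + 3*((S N n ω : ℝ)/N - sn)^2
                + 3*(sn*h*((N:ℝ)*lam N - β))^2 + 1/(2*(N:ℝ)) := by
            intro ω
            have hs : S N n ω ≤ N := by have := hsum N n ω; omega
            have hi : I N n ω ≤ N := by have := hsum N n ω; omega
            rw [hτ_def]
            exact pointwise_I hh hβ (hlamN N) hgam hN1 hs hi hsn0 hinn0
          have hGint : Integrable (fun ω =>
              3*(1 + sn*h*β)^2*((I N n ω : ℝ)/N - inn)^2 + 3*((S N n ω : ℝ)/N - sn)^2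
                + 3*(sn*h*((N:ℝ)*lam N - β))^2 + 1/(2*(N:ℝ))) (μ N) :=
            ((((intI N).const_mul _).add ((intS N).const_mul 3)).add
              (integrable_const _)).add (integrable_const _)
          have hnn : 0 ≤ᵐ[μ N] fun ω =>
              ((I N n ω : ℝ) * (1 - qG gam h) / N
                + (S N n ω : ℝ) * pI (lam N) h (I N n ω) / N - τ)^2
                + ((S N n ω : ℝ) * pI (lam N) h (I N n ω) * (1 - pI (lam N) h (I N n ω))
                   + (I N n ω : ℝ) * qG gam h * (1 - qG gam h)) / (N:ℝ)^2 := by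
            refine Filter.Eventually.of_forall fun ω => ?_
            simp only [Pi.zero_apply]
            obtain ⟨hp0, hp1⟩ := pI_mem (hlamN N) hh (I N n ω)
            obtain ⟨hq0, hq1⟩ := qG_mem hgam hh
            have h1 : (0:ℝ) ≤ ((S N n ω : ℝ) * pI (lam N) h (I N n ω)
                * (1 - pI (lam N) h (I N n ω))
                + (I N n ω : ℝ) * qG gam h * (1 - qG gam h)) / (N:ℝ)^2 := by
              apply div_nonneg _ (by positivity)
              have ha := mul_nonneg (mul_nonneg (show (0:ℝ) ≤ (S N n ω : ℝ) by positivity)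
                hp0) (by linarith : (0:ℝ) ≤ 1 - pI (lam N) h (I N n ω))
              have hb := mul_nonneg (mul_nonneg (show (0:ℝ) ≤ (I N n ω : ℝ) by positivity)
                hq0) (by linarith : (0:ℝ) ≤ 1 - qG gam h)
              linarith
            have h2 := sq_nonneg ((I N n ω : ℝ) * (1 - qG gam h) / N
                + (S N n ω : ℝ) * pI (lam N) h (I N n ω) / N - τ)
            linarith
          have i1 : Integrable (fun ω => 3*(1 + sn*h*β)^2*((I N n ω : ℝ)/N - inn)^2) (μ N) :=
            (intI N).const_mul _
          have i2 : Integrable (fun ω => 3*((S N n ω : ℝ)/N - sn)^2) (μ N) :=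
            (intS N).const_mul 3
          have i3 : Integrable (fun _ : Ω N => 3*(sn*h*((N:ℝ)*lam N - β))^2) (μ N) :=
            integrable_const _
          have i4 : Integrable (fun _ : Ω N => 1/(2*(N:ℝ))) (μ N) := integrable_const _
          have i12 : Integrable (fun ω => 3*(1 + sn*h*β)^2*((I N n ω : ℝ)/N - inn)^2
              + 3*((S N n ω : ℝ)/N - sn)^2) (μ N) := i1.add i2
          have i123 : Integrable (fun ω => 3*(1 + sn*h*β)^2*((I N n ω : ℝ)/N - inn)^2
              + 3*((S N n ω : ℝ)/N - sn)^2 + 3*(sn*h*((N:ℝ)*lam N - β))^2) (μ N) :=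
            i12.add i3
          refine le_trans (integral_mono_of_nonneg hnn hGint
            (Filter.Eventually.of_forall hle)) (le_of_eq ?_)
          rw [integral_add i123 i4, integral_add i12 i3, integral_add i1 i2]
          simp [integral_const_mul]
        have hBI : Filter.Tendsto (fun N : ℕ =>
            3*(1 + sn*h*β)^2*(∫ ω, ((I N n ω : ℝ)/N - inn)^2 ∂(μ N))
              + 3*(∫ ω, ((S N n ω : ℝ)/N - sn)^2 ∂(μ N))
              + 3*(sn*h*((N:ℝ)*lam N - β))^2
              + 1/(2*(N:ℝ))) Filter.atTop (nhds 0) := by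
          have h1 := ((ihI.const_mul (3*(1 + sn*h*β)^2)).add (ihS.const_mul 3)).add
            (hz2.add hhalf)
          simp only [mul_zero, add_zero, zero_add] at h1
          refine h1.congr fun N => by ring
        exact tendsto_of_tendsto_of_tendsto_of_le_of_le' tendsto_const_nhds hBI
          (lower τ I) hub
  -- conclusion helper
  have concl : ∀ (T : ∀ N, ℕ → Ω N → ℕ) (n : ℕ) (c : ℝ),
      (∀ N, Measurable (T N n)) → (∀ N ω, T N n ω ≤ N) →
      Filter.Tendsto (fun N : ℕ => ∫ ω, ((T N n ω : ℝ)/N - c)^2 ∂(μ N))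
        Filter.atTop (nhds 0) →
      Filter.Tendsto (fun N : ℕ => ∫ ω, (T N n ω : ℝ)/N ∂(μ N)) Filter.atTop (nhds c)
      ∧ (∀ ε : ℝ, 0 < ε →
          Filter.Tendsto (fun N : ℕ => μ N {ω | ε < |(T N n ω : ℝ)/N - c|})
            Filter.atTop (nhds 0)) := by
    intro T n c hTmeas hTle hL2
    have hint1 : ∀ N : ℕ, Integrable (fun ω => (T N n ω : ℝ)/N - c) (μ N) := by
      intro N
      haveI := hprob N
      have hm : Measurable fun ω => (T N n ω : ℝ)/(N:ℝ) - c :=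
        (measurable_of_countable (fun m : ℕ => (m:ℝ)/(N:ℝ) - c)).comp (hTmeas N)
      refine (integrable_const (1 + |c|)).mono' hm.aestronglyMeasurable
        (Filter.Eventually.of_forall fun ω => ?_)
      obtain ⟨h0, h1⟩ := div_mem_unit (hTle N ω)
      rw [Real.norm_eq_abs]
      refine abs_le.mpr ⟨?_, ?_⟩
      · nlinarith [neg_abs_le c, le_abs_self c]
      · nlinarith [neg_abs_le c, le_abs_self c]
    have hint2 : ∀ N : ℕ, Integrable (fun ω => ((T N n ω : ℝ)/N - c)^2) (μ N) := by
      intro N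
      haveI := hprob N
      have hm : Measurable fun ω => ((T N n ω : ℝ)/(N:ℝ) - c)^2 :=
        (measurable_of_countable (fun m : ℕ => ((m:ℝ)/(N:ℝ) - c)^2)).comp (hTmeas N)
      refine (integrable_const ((1 + |c|)^2)).mono' hm.aestronglyMeasurable
        (Filter.Eventually.of_forall fun ω => ?_)
      obtain ⟨h0, h1⟩ := div_mem_unit (hTle N ω)
      rw [Real.norm_eq_abs, abs_of_nonneg (sq_nonneg _)]
      exact sq_comp_bound h0 h1
    have hTint : ∀ N : ℕ, Integrable (fun ω => (T N n ω : ℝ)/N) (μ N) := by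
      intro N
      haveI := hprob N
      have hm : Measurable fun ω => (T N n ω : ℝ)/(N:ℝ) :=
        (measurable_of_countable (fun m : ℕ => (m:ℝ)/(N:ℝ))).comp (hTmeas N)
      refine (integrable_const (1:ℝ)).mono' hm.aestronglyMeasurable
        (Filter.Eventually.of_forall fun ω => ?_)
      obtain ⟨h0, h1⟩ := div_mem_unit (hTle N ω)
      rw [Real.norm_eq_abs, abs_of_nonneg h0]
      exact h1
    constructor
    · have hdiff : Filter.Tendsto (fun N : ℕ => (∫ ω, (T N n ω : ℝ)/N ∂(μ N)) - c)
          Filter.atTop (nhds 0) := by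
        rw [Metric.tendsto_atTop]
        intro ε hε
        obtain ⟨N₀, hN₀⟩ := Metric.tendsto_atTop.mp hL2 (ε^2/2) (by positivity)
        refine ⟨N₀, fun N hN => ?_⟩
        haveI := hprob N
        have hES0 : 0 ≤ ∫ ω, ((T N n ω : ℝ)/N - c)^2 ∂(μ N) :=
          integral_nonneg fun ω => sq_nonneg _
        have hES : ∫ ω, ((T N n ω : ℝ)/N - c)^2 ∂(μ N) < ε^2/2 := by
          have := hN₀ N hN
          rw [Real.dist_eq, sub_zero, abs_of_nonneg hES0] at this
          exact this
        set δ : ℝ := ε/2 with hδ_def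
        have hδ : 0 < δ := by positivity
        have hptw : ∀ ω, |(T N n ω : ℝ)/N - c| ≤ (δ^2 + ((T N n ω : ℝ)/N - c)^2)/(2*δ) := by
          intro ω
          rw [le_div_iff₀ (by positivity)]
          nlinarith [sq_nonneg (|(T N n ω : ℝ)/N - c| - δ), sq_abs ((T N n ω : ℝ)/N - c)]
        have h1 : ∫ ω, |(T N n ω : ℝ)/N - c| ∂(μ N)
            ≤ (δ^2 + ∫ ω, ((T N n ω : ℝ)/N - c)^2 ∂(μ N))/(2*δ) := by
          have hrhs : Integrable (fun ω => (δ^2 + ((T N n ω : ℝ)/N - c)^2)/(2*δ)) (μ N) :=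
            ((integrable_const (δ^2)).add (hint2 N)).div_const _
          calc ∫ ω, |(T N n ω : ℝ)/N - c| ∂(μ N)
              ≤ ∫ ω, (δ^2 + ((T N n ω : ℝ)/N - c)^2)/(2*δ) ∂(μ N) :=
                integral_mono (hint1 N).abs hrhs hptw
            _ = (δ^2 + ∫ ω, ((T N n ω : ℝ)/N - c)^2 ∂(μ N))/(2*δ) := by
                rw [integral_div, integral_add (integrable_const _) (hint2 N),
                  integral_const]
                simp
        have h2 : |∫ ω, ((T N n ω : ℝ)/N - c) ∂(μ N)|
            ≤ ∫ ω, |(T N n ω : ℝ)/N - c| ∂(μ N) := by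
          simpa [Real.norm_eq_abs] using
            norm_integral_le_integral_norm (f := fun ω => (T N n ω : ℝ)/N - c) (μ := μ N)
        have h3 : ∫ ω, ((T N n ω : ℝ)/N - c) ∂(μ N)
            = (∫ ω, (T N n ω : ℝ)/N ∂(μ N)) - c := by
          rw [integral_sub (hTint N) (integrable_const c), integral_const]
          simp
        rw [Real.dist_eq, sub_zero, ← h3]
        calc |∫ ω, ((T N n ω : ℝ)/N - c) ∂(μ N)|
            ≤ (δ^2 + ∫ ω, ((T N n ω : ℝ)/N - c)^2 ∂(μ N))/(2*δ) := le_trans h2 h1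
          _ < ε := by
              rw [div_lt_iff₀ (by positivity)]
              nlinarith
      have := hdiff.add (tendsto_const_nhds (x := c))
      simp only [zero_add] at this
      refine this.congr fun N => by ring
    · intro ε hε
      have hbound : ∀ N : ℕ, μ N {ω | ε < |(T N n ω : ℝ)/N - c|}
          ≤ ENNReal.ofReal ((∫ ω, ((T N n ω : ℝ)/N - c)^2 ∂(μ N))/ε^2) := by
        intro N
        haveI := hprob N
        have hnn : 0 ≤ᵐ[μ N] fun ω => ((T N n ω : ℝ)/N - c)^2 :=
          Filter.Eventually.of_forall fun ω => sq_nonneg _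
        have hcheb := mul_meas_ge_le_integral_of_nonneg hnn (hint2 N) (ε^2)
        have hsub : {ω | ε < |(T N n ω : ℝ)/N - c|}
            ⊆ {ω | ε^2 ≤ ((T N n ω : ℝ)/N - c)^2} := by
          intro ω hω
          have h1 : ε < |(T N n ω : ℝ)/N - c| := hω
          have h2 := sq_abs ((T N n ω : ℝ)/N - c)
          have h3 := abs_nonneg ((T N n ω : ℝ)/N - c)
          show ε^2 ≤ ((T N n ω : ℝ)/N - c)^2
          nlinarith
        have hES0 : 0 ≤ ∫ ω, ((T N n ω : ℝ)/N - c)^2 ∂(μ N) :=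
          integral_nonneg fun ω => sq_nonneg _
        rw [ENNReal.le_ofReal_iff_toReal_le (measure_ne_top _ _) (by positivity)]
        have ht1 : (μ N {ω | ε < |(T N n ω : ℝ)/N - c|}).toReal
            ≤ (μ N {ω | ε^2 ≤ ((T N n ω : ℝ)/N - c)^2}).toReal :=
          ENNReal.toReal_mono (measure_ne_top _ _) (measure_mono hsub)
        have ht2 : (μ N {ω | ε^2 ≤ ((T N n ω : ℝ)/N - c)^2}).toReal
            ≤ (∫ ω, ((T N n ω : ℝ)/N - c)^2 ∂(μ N))/ε^2 := by
          rw [le_div_iff₀ (by positivity)]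
          calc (μ N {ω | ε^2 ≤ ((T N n ω : ℝ)/N - c)^2}).toReal * ε^2
              = ε^2 * (μ N {ω | ε^2 ≤ ((T N n ω : ℝ)/N - c)^2}).toReal := mul_comm _ _
            _ ≤ _ := hcheb
        exact le_trans ht1 ht2
      have hup : Filter.Tendsto (fun N : ℕ =>
          ENNReal.ofReal ((∫ ω, ((T N n ω : ℝ)/N - c)^2 ∂(μ N))/ε^2))
          Filter.atTop (nhds 0) := by
        have h1 := ENNReal.tendsto_ofReal (hL2.div_const (ε^2))
        simpa using h1
      exact tendsto_of_tendsto_of_tendsto_of_le_of_le' tendsto_const_nhds hup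
        (Filter.Eventually.of_forall fun N => zero_le)
        (Filter.Eventually.of_forall hbound)
  intro n
  obtain ⟨kS, kI⟩ := key n
  obtain ⟨cS1, cS2⟩ := concl S n (detSIR (β*h) (gam*h) s₀ i₀ n).1
    (fun N => hSmeas N n) (fun N ω => by have := hsum N n ω; omega) kS
  obtain ⟨cI1, cI2⟩ := concl I n (detSIR (β*h) (gam*h) s₀ i₀ n).2
    (fun N => hImeas N n) (fun N ω => by have := hsum N n ω; omega) kI
  exact ⟨_, _, cS1, cI1, cS2, cI2⟩
end

section
/- Fix λ, γ > 0 and N ≥ 1, and define forecast_{λ,h}(x, y) = (x·e^{−λyh}, x·(1 − e^{−λyh}) + y·e^{−γh}) for h > 0. Then there exists a constant C > 0 (depending only on λ, γ and N) such that for all h ∈ (0, 1], all integers k ≥ 1 and all (x, y) ∈ [0, N]², ‖forecast_{λ,h}(x, y) − (forecast_{λ,h/k})^{(k)}(x, y)‖_∞ ≤ C·h²; that is, a single step of length h agrees with k successive steps of length h/k up to an error O(h²) uniform in k. -/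
open Real

set_option maxHeartbeats 1000000

/-- The one-step forecast function of the discrete SIR model:
`forecast_{λ,h}(x, y) = (x e^{-λyh}, x (1 - e^{-λyh}) + y e^{-γh})`, the first coordinate
being the susceptible count and the second the infectious count. -/
noncomputable def forecast (lam gam h : ℝ) : ℝ × ℝ → ℝ × ℝ :=
  fun p =>
    (p.1 * exp (-(lam * p.2 * h)),
      p.1 * (1 - exp (-(lam * p.2 * h))) + p.2 * exp (-(gam * h)))

namespace SIRAux

lemma one_sub_exp_le {t : ℝ} (ht : 0 ≤ t) : 1 - exp (-t) ≤ t := by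
  nlinarith [add_one_le_exp (-t)]

lemma exp_neg_le_one {t : ℝ} (ht : 0 ≤ t) : exp (-t) ≤ 1 := by
  calc exp (-t) ≤ exp 0 := exp_le_exp.mpr (by linarith)
    _ = 1 := exp_zero

lemma one_sub_exp_nonneg {t : ℝ} (ht : 0 ≤ t) : 0 ≤ 1 - exp (-t) := by
  have := exp_neg_le_one ht; linarith

lemma exp_neg_sub_le {A B : ℝ} (hA : 0 ≤ A) (h : A ≤ B) :
    0 ≤ exp (-A) - exp (-B) ∧ exp (-A) - exp (-B) ≤ B - A := by
  constructor
  · have := exp_le_exp.mpr (neg_le_neg h); linarith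
  · have e2 : exp (-A) * exp (-(B - A)) = exp (-B) := by rw [← exp_add]; congr 1; ring
    have h3 := one_sub_exp_le (t := B - A) (by linarith)
    have h4 := one_sub_exp_nonneg (t := B - A) (by linarith)
    have h5 := exp_neg_le_one hA
    nlinarith [exp_pos (-A), mul_nonneg (by linarith : (0:ℝ) ≤ 1 - exp (-A)) h4]

lemma abs_exp_neg_sub {A B : ℝ} (hA : 0 ≤ A) (hB : 0 ≤ B) :
    |exp (-A) - exp (-B)| ≤ |A - B| := by
  rcases le_total A B with h | h
  · obtain ⟨c1, c2⟩ := exp_neg_sub_le hA h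
    rw [abs_of_nonneg c1, abs_of_nonpos (by linarith : A - B ≤ 0)]; linarith
  · obtain ⟨c1, c2⟩ := exp_neg_sub_le hB h
    rw [abs_sub_comm, abs_of_nonneg c1, abs_of_nonneg (by linarith : (0:ℝ) ≤ A - B)]
    linarith

lemma mem_step {lam gam h M : ℝ} (hlam : 0 < lam) (hgam : 0 < gam) (hh : 0 ≤ h)
    {p : ℝ × ℝ} (h1 : 0 ≤ p.1) (h2 : 0 ≤ p.2) (h3 : p.1 + p.2 ≤ M) :
    0 ≤ (forecast lam gam h p).1 ∧ 0 ≤ (forecast lam gam h p).2 ∧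
      (forecast lam gam h p).1 + (forecast lam gam h p).2 ≤ M := by
  obtain ⟨x, y⟩ := p
  simp only at h1 h2 h3
  simp only [forecast]
  have ht : 0 ≤ lam * y * h := by positivity
  have hE0 := (exp_pos (-(lam * y * h))).le
  have hE1 := exp_neg_le_one ht
  have h1E0 := one_sub_exp_nonneg ht
  have hG0 := (exp_pos (-(gam * h))).le
  have hG1 := exp_neg_le_one (t := gam * h) (by positivity)
  refine ⟨by positivity, ?_, ?_⟩
  · exact add_nonneg (mul_nonneg h1 h1E0) (mul_nonneg h2 hG0)
  · nlinarith [mul_le_mul_of_nonneg_left hG1 h2]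

lemma mem_iter {lam gam s M : ℝ} (hlam : 0 < lam) (hgam : 0 < gam) (hs : 0 ≤ s)
    {p : ℝ × ℝ} (h1 : 0 ≤ p.1) (h2 : 0 ≤ p.2) (h3 : p.1 + p.2 ≤ M) (j : ℕ) :
    0 ≤ ((forecast lam gam s)^[j] p).1 ∧ 0 ≤ ((forecast lam gam s)^[j] p).2 ∧
      ((forecast lam gam s)^[j] p).1 + ((forecast lam gam s)^[j] p).2 ≤ M := by
  induction j with
  | zero => exact ⟨h1, h2, h3⟩
  | succ n ih =>
    rw [Function.iterate_succ_apply']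
    exact mem_step hlam hgam hs ih.1 ih.2.1 ih.2.2

lemma twostep {lam gam M a b : ℝ} (hlam : 0 < lam) (hgam : 0 < gam) (hM : 0 ≤ M)
    (ha : 0 ≤ a) (hb : 0 ≤ b) {p : ℝ × ℝ}
    (h1 : 0 ≤ p.1) (h2 : 0 ≤ p.2) (h3 : p.1 + p.2 ≤ M) :
    |(forecast lam gam (a + b) p).1 - (forecast lam gam b (forecast lam gam a p)).1|
        ≤ (lam * M ^ 2 * (lam * M + gam) + lam * gam * M ^ 2) * (a * b) ∧
    |(forecast lam gam (a + b) p).2 - (forecast lam gam b (forecast lam gam a p)).2|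
        ≤ (lam * M ^ 2 * (lam * M + gam) + lam * gam * M ^ 2) * (a * b) := by
  obtain ⟨x, y⟩ := p
  simp only at h1 h2 h3
  have hxM : x ≤ M := by linarith
  have hyM : y ≤ M := by linarith
  simp only [forecast]
  set E := exp (-(lam * y * a)) with hE
  set Ga := exp (-(gam * a)) with hGa
  set Gb := exp (-(gam * b)) with hGb
  set Y := x * (1 - E) + y * Ga with hY
  clear_value E Ga Gb Y
  have hE0 : 0 < E := by rw [hE]; exact exp_pos _
  have hE1 : E ≤ 1 := by rw [hE]; exact exp_neg_le_one (by positivity)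
  have h1E : 1 - E ≤ lam * y * a := by rw [hE]; exact one_sub_exp_le (by positivity)
  have h1E0 : 0 ≤ 1 - E := by rw [hE]; exact one_sub_exp_nonneg (by positivity)
  have hGa0 : 0 < Ga := by rw [hGa]; exact exp_pos _
  have h1Ga : 1 - Ga ≤ gam * a := by rw [hGa]; exact one_sub_exp_le (by positivity)
  have h1Ga0 : 0 ≤ 1 - Ga := by rw [hGa]; exact one_sub_exp_nonneg (by positivity)
  have h1Gb : 1 - Gb ≤ gam * b := by rw [hGb]; exact one_sub_exp_le (by positivity)
  have h1Gb0 : 0 ≤ 1 - Gb := by rw [hGb]; exact one_sub_exp_nonneg (by positivity)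
  have hY0 : 0 ≤ Y := by
    rw [hY]; exact add_nonneg (mul_nonneg h1 h1E0) (mul_nonneg h2 hGa0.le)
  have hxy2 : x * y ≤ M * M := mul_le_mul hxM hyM h2 hM
  have hA : x * (1 - E) ≤ lam * M ^ 2 * a := by
    calc x * (1 - E) ≤ x * (lam * y * a) := mul_le_mul_of_nonneg_left h1E h1
      _ ≤ lam * M ^ 2 * a := by nlinarith [mul_le_mul_of_nonneg_left hxy2 (mul_nonneg hlam.le ha)]
  have hA0 : 0 ≤ x * (1 - E) := mul_nonneg h1 h1E0
  have hB : y * (1 - Ga) ≤ gam * M * a := by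
    calc y * (1 - Ga) ≤ y * (gam * a) := mul_le_mul_of_nonneg_left h1Ga h2
      _ ≤ gam * M * a := by nlinarith [mul_le_mul_of_nonneg_left hyM (mul_nonneg hgam.le ha)]
  have hB0 : 0 ≤ y * (1 - Ga) := mul_nonneg h2 h1Ga0
  have hMM : 0 ≤ lam * M ^ 2 * a := by positivity
  have hgMa : 0 ≤ gam * M * a := by positivity
  have hdy : |Y - y| ≤ M * (lam * M + gam) * a := by
    rw [hY, abs_le]
    constructor
    · nlinarith [hA0, hB, hMM]
    · nlinarith [hA, hB0, hgMa]
  have hsplit : exp (-(lam * y * (a + b))) = E * exp (-(lam * y * b)) := by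
    rw [hE, ← exp_add]; congr 1; ring
  have hGsplit : exp (-(gam * (a + b))) = Ga * Gb := by
    rw [hGa, hGb, ← exp_add]; congr 1; ring
  -- the core bound on |x E (F - F')|
  have hxEM : x * E ≤ M := by nlinarith [mul_le_mul_of_nonneg_left hE1 h1]
  have hFd : |exp (-(lam * y * b)) - exp (-(lam * Y * b))| ≤ lam * b * (M * (lam * M + gam) * a) := by
    calc |exp (-(lam * y * b)) - exp (-(lam * Y * b))|
        ≤ |lam * y * b - lam * Y * b| := abs_exp_neg_sub (by positivity) (by positivity)
      _ = lam * b * |Y - y| := by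
          rw [show lam * y * b - lam * Y * b = -(lam * b * (Y - y)) by ring, abs_neg, abs_mul,
            abs_of_nonneg (by positivity : (0:ℝ) ≤ lam * b)]
      _ ≤ lam * b * (M * (lam * M + gam) * a) :=
          mul_le_mul_of_nonneg_left hdy (by positivity)
  have habs1 : |x * E * (exp (-(lam * y * b)) - exp (-(lam * Y * b)))|
      ≤ lam * M ^ 2 * (lam * M + gam) * (a * b) := by
    rw [abs_mul, abs_of_nonneg (mul_nonneg h1 hE0.le)]
    calc x * E * |exp (-(lam * y * b)) - exp (-(lam * Y * b))|
        ≤ M * (lam * b * (M * (lam * M + gam) * a)) :=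
          mul_le_mul hxEM hFd (abs_nonneg _) hM
      _ = lam * M ^ 2 * (lam * M + gam) * (a * b) := by ring
  have hC2 : 0 ≤ lam * gam * M ^ 2 * (a * b) := by positivity
  constructor
  · have hrw : x * exp (-(lam * y * (a + b))) - x * E * exp (-(lam * Y * b))
        = x * E * (exp (-(lam * y * b)) - exp (-(lam * Y * b))) := by
      rw [hsplit]; ring
    rw [hrw]
    nlinarith [habs1, hC2]
  · have hrw2 : x * (1 - exp (-(lam * y * (a + b)))) + y * exp (-(gam * (a + b)))
        - (x * E * (1 - exp (-(lam * Y * b))) + Y * Gb)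
        = x * E * (exp (-(lam * Y * b)) - exp (-(lam * y * b)))
          + x * (1 - E) * (1 - Gb) := by
      rw [hsplit, hGsplit, hY]; ring
    rw [hrw2]
    have t1 : |x * E * (exp (-(lam * Y * b)) - exp (-(lam * y * b)))|
        ≤ lam * M ^ 2 * (lam * M + gam) * (a * b) := by
      rw [show x * E * (exp (-(lam * Y * b)) - exp (-(lam * y * b)))
          = -(x * E * (exp (-(lam * y * b)) - exp (-(lam * Y * b)))) by ring, abs_neg]
      exact habs1
    have t2 : |x * (1 - E) * (1 - Gb)| ≤ lam * gam * M ^ 2 * (a * b) := by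
      rw [abs_of_nonneg (mul_nonneg hA0 h1Gb0)]
      calc x * (1 - E) * (1 - Gb) ≤ (lam * M ^ 2 * a) * (gam * b) :=
            mul_le_mul hA h1Gb h1Gb0 hMM
        _ = lam * gam * M ^ 2 * (a * b) := by ring
    calc |x * E * (exp (-(lam * Y * b)) - exp (-(lam * y * b))) + x * (1 - E) * (1 - Gb)|
        ≤ |x * E * (exp (-(lam * Y * b)) - exp (-(lam * y * b)))| + |x * (1 - E) * (1 - Gb)| :=
          abs_add_le _ _
      _ ≤ lam * M ^ 2 * (lam * M + gam) * (a * b) + lam * gam * M ^ 2 * (a * b) := add_le_add t1 t2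
      _ = (lam * M ^ 2 * (lam * M + gam) + lam * gam * M ^ 2) * (a * b) := by ring

lemma lip {lam gam M s d : ℝ} (hlam : 0 < lam) (hgam : 0 < gam) (hM : 0 ≤ M) (hs : 0 ≤ s)
    {p q : ℝ × ℝ} (hp1 : 0 ≤ p.1) (hp2 : 0 ≤ p.2) (hp3 : p.1 + p.2 ≤ M)
    (hq1 : 0 ≤ q.1) (hq2 : 0 ≤ q.2) (hq3 : q.1 + q.2 ≤ M)
    (hd1 : |p.1 - q.1| ≤ d) (hd2 : |p.2 - q.2| ≤ d) :
    |(forecast lam gam s p).1 - (forecast lam gam s q).1| ≤ (1 + 2 * lam * M * s) * d ∧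
    |(forecast lam gam s p).2 - (forecast lam gam s q).2| ≤ (1 + 2 * lam * M * s) * d := by
  obtain ⟨x, y⟩ := p
  obtain ⟨x', y'⟩ := q
  simp only at hp1 hp2 hp3 hq1 hq2 hq3 hd1 hd2
  simp only [forecast]
  have hd0 : 0 ≤ d := le_trans (abs_nonneg _) hd1
  have hyM : y ≤ M := by linarith
  have hx'M : x' ≤ M := by linarith
  have hE0 := (exp_pos (-(lam * y * s))).le
  have hE1 : exp (-(lam * y * s)) ≤ 1 := exp_neg_le_one (by positivity)
  have h1E : 1 - exp (-(lam * y * s)) ≤ lam * M * s := by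
    have := one_sub_exp_le (t := lam * y * s) (by positivity)
    nlinarith [mul_nonneg hlam.le hs]
  have h1E0 : 0 ≤ 1 - exp (-(lam * y * s)) := one_sub_exp_nonneg (by positivity)
  have hG0 := (exp_pos (-(gam * s))).le
  have hG1 : exp (-(gam * s)) ≤ 1 := exp_neg_le_one (by positivity)
  have hdiffE : |exp (-(lam * y * s)) - exp (-(lam * y' * s))| ≤ lam * s * d := by
    calc |exp (-(lam * y * s)) - exp (-(lam * y' * s))|
        ≤ |lam * y * s - lam * y' * s| := abs_exp_neg_sub (by positivity) (by positivity)
      _ = lam * s * |y - y'| := by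
          rw [show lam * y * s - lam * y' * s = lam * s * (y - y') by ring, abs_mul,
            abs_of_nonneg (by positivity : (0:ℝ) ≤ lam * s)]
      _ ≤ lam * s * d := mul_le_mul_of_nonneg_left hd2 (by positivity)
  have hMsd : 0 ≤ lam * M * s * d := by positivity
  constructor
  · have hrw : x * exp (-(lam * y * s)) - x' * exp (-(lam * y' * s))
        = (x - x') * exp (-(lam * y * s))
          + x' * (exp (-(lam * y * s)) - exp (-(lam * y' * s))) := by ring
    rw [hrw]
    have t1 : |(x - x') * exp (-(lam * y * s))| ≤ d := by
      rw [abs_mul, abs_of_nonneg hE0]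
      nlinarith [abs_nonneg (x - x')]
    have t2 : |x' * (exp (-(lam * y * s)) - exp (-(lam * y' * s)))| ≤ M * (lam * s * d) := by
      rw [abs_mul, abs_of_nonneg hq1]
      exact mul_le_mul hx'M hdiffE (abs_nonneg _) hM
    calc |(x - x') * exp (-(lam * y * s)) + x' * (exp (-(lam * y * s)) - exp (-(lam * y' * s)))|
        ≤ |(x - x') * exp (-(lam * y * s))|
          + |x' * (exp (-(lam * y * s)) - exp (-(lam * y' * s)))| := abs_add_le _ _
      _ ≤ d + M * (lam * s * d) := add_le_add t1 t2
      _ ≤ (1 + 2 * lam * M * s) * d := by nlinarith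
  · have hrw2 : x * (1 - exp (-(lam * y * s))) + y * exp (-(gam * s))
        - (x' * (1 - exp (-(lam * y' * s))) + y' * exp (-(gam * s)))
        = (x - x') * (1 - exp (-(lam * y * s)))
          + x' * (exp (-(lam * y' * s)) - exp (-(lam * y * s)))
          + (y - y') * exp (-(gam * s)) := by ring
    rw [hrw2]
    have t1 : |(x - x') * (1 - exp (-(lam * y * s)))| ≤ d * (lam * M * s) := by
      rw [abs_mul, abs_of_nonneg h1E0]
      exact mul_le_mul hd1 h1E h1E0 hd0
    have t2 : |x' * (exp (-(lam * y' * s)) - exp (-(lam * y * s)))| ≤ M * (lam * s * d) := by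
      rw [abs_mul, abs_of_nonneg hq1, abs_sub_comm]
      exact mul_le_mul hx'M hdiffE (abs_nonneg _) hM
    have t3 : |(y - y') * exp (-(gam * s))| ≤ d := by
      rw [abs_mul, abs_of_nonneg hG0]
      nlinarith [abs_nonneg (y - y')]
    calc |(x - x') * (1 - exp (-(lam * y * s)))
          + x' * (exp (-(lam * y' * s)) - exp (-(lam * y * s)))
          + (y - y') * exp (-(gam * s))|
        ≤ |(x - x') * (1 - exp (-(lam * y * s)))
            + x' * (exp (-(lam * y' * s)) - exp (-(lam * y * s)))|
          + |(y - y') * exp (-(gam * s))| := abs_add_le _ _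
      _ ≤ (|(x - x') * (1 - exp (-(lam * y * s)))|
            + |x' * (exp (-(lam * y' * s)) - exp (-(lam * y * s)))|)
          + |(y - y') * exp (-(gam * s))| := add_le_add_left (abs_add_le _ _) _
      _ ≤ (d * (lam * M * s) + M * (lam * s * d)) + d := add_le_add (add_le_add t1 t2) t3
      _ ≤ (1 + 2 * lam * M * s) * d := by nlinarith

lemma main {lam gam M s : ℝ} (hlam : 0 < lam) (hgam : 0 < gam) (hM : 0 ≤ M) (hs : 0 ≤ s)
    {p : ℝ × ℝ} (h1 : 0 ≤ p.1) (h2 : 0 ≤ p.2) (h3 : p.1 + p.2 ≤ M) (j : ℕ) :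
    |(forecast lam gam ((j : ℝ) * s) p).1 - ((forecast lam gam s)^[j] p).1|
        ≤ (lam * M ^ 2 * (lam * M + gam) + lam * gam * M ^ 2)
          * (1 + 2 * lam * M * s) ^ j * ((j : ℝ) ^ 2 * s ^ 2) ∧
    |(forecast lam gam ((j : ℝ) * s) p).2 - ((forecast lam gam s)^[j] p).2|
        ≤ (lam * M ^ 2 * (lam * M + gam) + lam * gam * M ^ 2)
          * (1 + 2 * lam * M * s) ^ j * ((j : ℝ) ^ 2 * s ^ 2) := by
  have hC0 : 0 ≤ lam * M ^ 2 * (lam * M + gam) + lam * gam * M ^ 2 := by positivity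
  induction j with
  | zero => simp [forecast]
  | succ n ih =>
    push_cast
    have hns : 0 ≤ (n : ℝ) * s := by positivity
    have hmem1 := mem_step (M := M) hlam hgam hns h1 h2 h3
    have hmem2 := mem_iter (M := M) hlam hgam hs h1 h2 h3 n
    set C0 := lam * M ^ 2 * (lam * M + gam) + lam * gam * M ^ 2 with hC0def
    set B := 1 + 2 * lam * M * s with hB
    have hB1 : (1:ℝ) ≤ B := by rw [hB]; nlinarith [mul_nonneg (mul_nonneg hlam.le hM) hs]
    have hB0 : (0:ℝ) ≤ B := by linarith
    set d := C0 * B ^ n * ((n : ℝ) ^ 2 * s ^ 2) with hd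
    clear_value C0 B d
    have hts := twostep (M := M) hlam hgam hM hns hs h1 h2 h3 (a := (n : ℝ) * s) (b := s)
    have hlip := lip (M := M) (d := d) hlam hgam hM hs hmem1.1 hmem1.2.1 hmem1.2.2
      hmem2.1 hmem2.2.1 hmem2.2.2 ih.1 ih.2
    rw [← hC0def] at hts
    rw [← hB] at hlip
    have hP : (1:ℝ) ≤ B ^ n * B := by
      rw [← pow_succ]; exact one_le_pow₀ hB1
    have hc : 0 ≤ C0 * s ^ 2 := mul_nonneg hC0 (sq_nonneg s)
    have hn0 : (0:ℝ) ≤ (n : ℝ) := Nat.cast_nonneg n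
    have key : C0 * (((n : ℝ) * s) * s) + B * d ≤ C0 * B ^ (n + 1) * (((n : ℝ) + 1) ^ 2 * s ^ 2) := by
      rw [hd, pow_succ B n]
      nlinarith [mul_nonneg (mul_nonneg (sub_nonneg.mpr hP) hc) (by linarith : (0:ℝ) ≤ 2 * (n : ℝ) + 1),
        mul_nonneg hc hn0, hc]
    have hcast : ((n : ℝ) + 1) * s = (n : ℝ) * s + s := by ring
    constructor
    · calc |(forecast lam gam (((n : ℝ) + 1) * s) p).1 - ((forecast lam gam s)^[n + 1] p).1|
          = |(forecast lam gam ((n : ℝ) * s + s) p).1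
              - (forecast lam gam s ((forecast lam gam s)^[n] p)).1| := by
            rw [hcast, Function.iterate_succ_apply']
        _ ≤ |(forecast lam gam ((n : ℝ) * s + s) p).1
              - (forecast lam gam s (forecast lam gam ((n : ℝ) * s) p)).1|
            + |(forecast lam gam s (forecast lam gam ((n : ℝ) * s) p)).1
              - (forecast lam gam s ((forecast lam gam s)^[n] p)).1| := abs_sub_le _ _ _
        _ ≤ C0 * (((n : ℝ) * s) * s) + B * d := add_le_add hts.1 hlip.1
        _ ≤ C0 * B ^ (n + 1) * (((n : ℝ) + 1) ^ 2 * s ^ 2) := key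
    · calc |(forecast lam gam (((n : ℝ) + 1) * s) p).2 - ((forecast lam gam s)^[n + 1] p).2|
          = |(forecast lam gam ((n : ℝ) * s + s) p).2
              - (forecast lam gam s ((forecast lam gam s)^[n] p)).2| := by
            rw [hcast, Function.iterate_succ_apply']
        _ ≤ |(forecast lam gam ((n : ℝ) * s + s) p).2
              - (forecast lam gam s (forecast lam gam ((n : ℝ) * s) p)).2|
            + |(forecast lam gam s (forecast lam gam ((n : ℝ) * s) p)).2
              - (forecast lam gam s ((forecast lam gam s)^[n] p)).2| := abs_sub_le _ _ _
        _ ≤ C0 * (((n : ℝ) * s) * s) + B * d := add_le_add hts.2 hlip.2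
        _ ≤ C0 * B ^ (n + 1) * (((n : ℝ) + 1) ^ 2 * s ^ 2) := key

end SIRAux

/-- Fix `λ, γ > 0` and `N ≥ 1`.  There is a constant `C > 0` (depending only
on `λ`, `γ` and `N`) such that for all `h ∈ (0, 1]`, all `k ≥ 1` and all `(x, y) ∈ [0, N]²`,
`‖forecast_{λ,h}(x, y) - (forecast_{λ,h/k})^{(k)}(x, y)‖_∞ ≤ C h²`: a single step of length `h`
agrees with `k` successive steps of length `h/k` up to an error `O(h²)` uniform in `k`. -/
theorem forecast_rescaling
    (lam gam : ℝ) (hlam : 0 < lam) (hgam : 0 < gam)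
    (N : ℝ) (hN : 1 ≤ N) :
    ∃ C : ℝ, 0 < C ∧
      ∀ h : ℝ, 0 < h → h ≤ 1 →
        ∀ k : ℕ, 1 ≤ k →
          ∀ x y : ℝ, 0 ≤ x → x ≤ N → 0 ≤ y → y ≤ N →
            |(forecast lam gam h (x, y)).1
                - ((forecast lam gam (h / k))^[k] (x, y)).1| ≤ C * h ^ 2 ∧
            |(forecast lam gam h (x, y)).2
                - ((forecast lam gam (h / k))^[k] (x, y)).2| ≤ C * h ^ 2 := by
  set M := 2 * N with hMdef
  have hM0 : 0 < M := by rw [hMdef]; linarith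
  have hC0 : 0 < lam * M ^ 2 * (lam * M + gam) + lam * gam * M ^ 2 := by
    have a1 : 0 < lam * M ^ 2 * (lam * M + gam) :=
      mul_pos (mul_pos hlam (pow_pos hM0 2)) (by nlinarith)
    have a2 : 0 < lam * gam * M ^ 2 := mul_pos (mul_pos hlam hgam) (pow_pos hM0 2)
    linarith
  refine ⟨(lam * M ^ 2 * (lam * M + gam) + lam * gam * M ^ 2) * exp (2 * lam * M), ?_, ?_⟩
  · exact mul_pos hC0 (exp_pos _)
  · intro h hh0 hh1 k hk x y hx hxN hy hyN
    have hk0 : (k : ℝ) ≠ 0 := Nat.cast_ne_zero.mpr (by omega)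
    set s := h / (k : ℝ) with hs
    have hs0 : 0 ≤ s := div_nonneg hh0.le (Nat.cast_nonneg k)
    have hks : (k : ℝ) * s = h := by rw [hs]; field_simp
    have hreg : ((x, y) : ℝ × ℝ).1 + ((x, y) : ℝ × ℝ).2 ≤ M := by
      simp only; rw [hMdef]; linarith
    have H := SIRAux.main (M := M) hlam hgam hM0.le hs0
      (p := ((x, y) : ℝ × ℝ)) hx hy hreg k
    rw [hks] at H
    have hsq : (k : ℝ) ^ 2 * s ^ 2 = h ^ 2 := by rw [← mul_pow, hks]
    rw [hsq] at H
    have hBM : 0 ≤ 2 * lam * M * s := by positivity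
    have hpow : (1 + 2 * lam * M * s) ^ k ≤ exp (2 * lam * M) := by
      have e1 : 1 + 2 * lam * M * s ≤ exp (2 * lam * M * s) := by
        nlinarith [add_one_le_exp (2 * lam * M * s)]
      have e2 : (1 + 2 * lam * M * s) ^ k ≤ exp (2 * lam * M * s) ^ k :=
        pow_le_pow_left₀ (by linarith) e1 k
      have e3 : exp (2 * lam * M * s) ^ k = exp (2 * lam * M * s * (k : ℝ)) := by
        rw [← exp_nat_mul]; congr 1; ring
      have e4 : 2 * lam * M * s * (k : ℝ) = 2 * lam * M * h := by
        rw [show 2 * lam * M * s * (k : ℝ) = 2 * lam * M * ((k : ℝ) * s) by ring, hks]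
      have e5 : exp (2 * lam * M * h) ≤ exp (2 * lam * M) := by
        apply exp_le_exp.mpr
        nlinarith [mul_pos (mul_pos (by linarith : (0:ℝ) < 2 * lam) hM0) hh0]
      calc (1 + 2 * lam * M * s) ^ k ≤ exp (2 * lam * M * s) ^ k := e2
        _ = exp (2 * lam * M * s * (k : ℝ)) := e3
        _ = exp (2 * lam * M * h) := by rw [e4]
        _ ≤ exp (2 * lam * M) := e5
    have hfin : (lam * M ^ 2 * (lam * M + gam) + lam * gam * M ^ 2)
          * (1 + 2 * lam * M * s) ^ k * h ^ 2
        ≤ (lam * M ^ 2 * (lam * M + gam) + lam * gam * M ^ 2) * exp (2 * lam * M) * h ^ 2 :=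
      mul_le_mul_of_nonneg_right (mul_le_mul_of_nonneg_left hpow hC0.le) (sq_nonneg h)
    exact ⟨H.1.trans hfin, H.2.trans hfin⟩
end

section
/- In the discrete stochastic SIR model, the sequence (I_k, S_k)_{k∈ℕ} is a homogeneous Markov chain with respect to the filtration 𝓕_k := σ((S_j, I_j) : j ≤ k): for every k ∈ ℕ and every bounded measurable function f : ℝ² → ℝ, 𝔼[f(I_{k+1}, S_{k+1}) | 𝓕_k] = F_f(I_k, S_k) almost surely, where F_f(l, m) := Σ_{u,w} f(l + u − w, m − u) · ℙ(Bin(m, 1 − e^{−λlh}) = u) · ℙ(Bin(l, 1 − e^{−γh}) = w), with Bin(n, p) denoting a binomial random variable with parameters n and p; in particular the conditional law of (I_{k+1}, S_{k+1}) given 𝓕_k depends only on (I_k, S_k) and not on k. -/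
open MeasureTheory ProbabilityTheory Filter Real

/-- The probability mass function of the binomial distribution with parameters `n` and `p`:
`ℙ(Bin(n, p) = u) = C(n, u) p^u (1-p)^{n-u}`. -/
noncomputable def binPMF (n : ℕ) (p : ℝ) (u : ℕ) : ℝ :=
  (n.choose u : ℝ) * p ^ u * (1 - p) ^ (n - u)


section SIRaux
open Finset

lemma SIRaux_bern_prod {c A : Finset ℕ} (hA : A ⊆ c) (p : ℝ) :
    ∏ i ∈ c, (if i ∈ A then p else 1 - p) = p ^ A.card * (1 - p) ^ (c.card - A.card) := by
  rw [← Finset.prod_sdiff hA]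
  have h1 : ∏ i ∈ c \ A, (if i ∈ A then p else 1 - p) = (1 - p) ^ (c \ A).card := by
    rw [Finset.prod_congr rfl (fun i hi => ?_), Finset.prod_const]
    simp [(Finset.mem_sdiff.mp hi).2]
  have h2 : ∏ i ∈ A, (if i ∈ A then p else 1 - p) = p ^ A.card := by
    rw [Finset.prod_congr rfl (fun i hi => ?_), Finset.prod_const]
    simp [hi]
  rw [h1, h2, Finset.card_sdiff_of_subset hA, mul_comm]

lemma SIRaux_sum_bern_one (c : Finset ℕ) (p : ℝ) :
    ∑ A ∈ c.powerset, ∏ i ∈ c, (if i ∈ A then p else 1 - p) = 1 := by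
  have h := Finset.prod_add (fun _ : ℕ => p) (fun _ : ℕ => 1 - p) c
  simp only [add_sub_cancel, Finset.prod_const, one_pow] at h
  rw [Finset.sum_congr rfl (fun A hA => by
    rw [SIRaux_bern_prod (Finset.mem_powerset.mp hA) p,
      ← Finset.card_sdiff_of_subset (Finset.mem_powerset.mp hA)])]
  exact h.symm

lemma SIRaux_binom_key (s N : ℕ) (hsN : s ≤ N) (p : ℝ) (F : ℕ → ℝ) :
    ∑ A ∈ (range N).powerset,
        F (A ∩ range s).card * ∏ i ∈ range N, (if i ∈ A then p else 1 - p)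
      = ∑ u ∈ range (s + 1), F u * binPMF s p u := by
  have hsub : range s ⊆ range N := Finset.range_subset_range.mpr hsN
  have hstep :
      ∑ A ∈ (range N).powerset,
          F (A ∩ range s).card * ∏ i ∈ range N, (if i ∈ A then p else 1 - p)
        = ∑ P ∈ (range s).powerset ×ˢ (range N \ range s).powerset,
            (F P.1.card * ∏ i ∈ range s, (if i ∈ P.1 then p else 1 - p)) *
              ∏ i ∈ range N \ range s, (if i ∈ P.2 then p else 1 - p) := by
    refine Finset.sum_nbij' (fun A => (A ∩ range s, A \ range s)) (fun P => P.1 ∪ P.2)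
      ?_ ?_ ?_ ?_ ?_
    · intro A hA
      simp only [Finset.mem_product, Finset.mem_powerset]
      exact ⟨Finset.inter_subset_right,
        Finset.sdiff_subset_sdiff (Finset.mem_powerset.mp hA) le_rfl⟩
    · intro P hP
      simp only [Finset.mem_product, Finset.mem_powerset] at hP ⊢
      exact Finset.union_subset (hP.1.trans hsub) (hP.2.trans Finset.sdiff_subset)
    · intro A hA
      ext i
      simp only [Finset.mem_union, Finset.mem_inter, Finset.mem_sdiff]
      tauto
    · rintro ⟨P1, P2⟩ hP
      simp only [Finset.mem_product, Finset.mem_powerset] at hP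
      have hd : Disjoint P2 (range s) :=
        Finset.disjoint_of_subset_left hP.2 Finset.sdiff_disjoint
      have e1 : (P1 ∪ P2) ∩ range s = P1 := by
        rw [Finset.union_inter_distrib_right, Finset.inter_eq_left.mpr hP.1,
          Finset.disjoint_iff_inter_eq_empty.mp hd, Finset.union_empty]
      have e2 : (P1 ∪ P2) \ range s = P2 := by
        rw [Finset.union_sdiff_distrib, Finset.sdiff_eq_empty_iff_subset.mpr hP.1,
          Finset.empty_union, Finset.sdiff_eq_self_iff_disjoint.mpr hd]
      simp only [Prod.mk.injEq]
      exact ⟨e1, e2⟩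
    · intro A hA
      have hA' := Finset.mem_powerset.mp hA
      simp only
      rw [mul_assoc]
      congr 1
      rw [← Finset.prod_sdiff hsub]
      rw [mul_comm]
      congr 1
      · apply Finset.prod_congr rfl
        intro i hi
        have : i ∈ A ∩ range s ↔ i ∈ A := by
          simp [Finset.mem_inter, hi]
        simp [this]
      · apply Finset.prod_congr rfl
        intro i hi
        have : i ∈ A \ range s ↔ i ∈ A := by
          simp [Finset.mem_sdiff, (Finset.mem_sdiff.mp hi).2]
        simp [this]
  rw [hstep, Finset.sum_product]
  have hinner : ∀ P1 ∈ (range s).powerset,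
      ∑ P2 ∈ (range N \ range s).powerset,
          (F P1.card * ∏ i ∈ range s, (if i ∈ P1 then p else 1 - p)) *
            ∏ i ∈ range N \ range s, (if i ∈ P2 then p else 1 - p)
        = F P1.card * ∏ i ∈ range s, (if i ∈ P1 then p else 1 - p) := by
    intro P1 _
    rw [← Finset.mul_sum, SIRaux_sum_bern_one, mul_one]
  rw [Finset.sum_congr rfl hinner]
  have hconst : ∀ P1 ∈ (range s).powerset,
      F P1.card * ∏ i ∈ range s, (if i ∈ P1 then p else 1 - p)
        = F P1.card * p ^ P1.card * (1 - p) ^ (s - P1.card) := by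
    intro P1 hP1
    rw [SIRaux_bern_prod (Finset.mem_powerset.mp hP1) p, Finset.card_range, mul_assoc]
  rw [Finset.sum_congr rfl hconst, Finset.sum_powerset, Finset.card_range]
  apply Finset.sum_congr rfl
  intro j hj
  rw [Finset.sum_powersetCard j (range s) (fun u => F u * p ^ u * (1 - p) ^ (s - u))]
  simp [binPMF, Finset.card_range]
  ring

lemma SIRaux_double_key (N s l : ℕ) (hs : s ≤ N) (hl : l ≤ N) (p q : ℝ) (f : ℝ × ℝ → ℝ) :
    ∑ A ∈ (range N).powerset, ∑ B ∈ (range N).powerset,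
        f ((l : ℝ) + (A ∩ range s).card - (B ∩ range l).card, (s : ℝ) - (A ∩ range s).card)
          * ((∏ i ∈ range N, if i ∈ A then p else 1 - p) *
             (∏ i ∈ range N, if i ∈ B then q else 1 - q))
      = ∑ u ∈ range (s + 1), ∑ w ∈ range (l + 1),
          f ((l : ℝ) + u - w, (s : ℝ) - u) * binPMF s p u * binPMF l q w := by
  have hinner : ∀ A ∈ (range N).powerset,
      ∑ B ∈ (range N).powerset,
          f ((l : ℝ) + (A ∩ range s).card - (B ∩ range l).card, (s : ℝ) - (A ∩ range s).card)
            * ((∏ i ∈ range N, if i ∈ A then p else 1 - p) *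
               (∏ i ∈ range N, if i ∈ B then q else 1 - q))
        = (fun u : ℕ => ∑ w ∈ range (l + 1),
            f ((l : ℝ) + u - w, (s : ℝ) - u) * binPMF l q w) (A ∩ range s).card
            * (∏ i ∈ range N, if i ∈ A then p else 1 - p) := by
    intro A _
    have hbk := SIRaux_binom_key l N hl q
      (fun w => f ((l : ℝ) + (A ∩ range s).card - w, (s : ℝ) - (A ∩ range s).card))
    simp only at hbk ⊢
    rw [← hbk, Finset.sum_mul]
    apply Finset.sum_congr rfl
    intro B _
    ring
  rw [Finset.sum_congr rfl hinner,
    SIRaux_binom_key s N hs p (fun u => ∑ w ∈ range (l + 1),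
      f ((l : ℝ) + u - w, (s : ℝ) - u) * binPMF l q w)]
  apply Finset.sum_congr rfl
  intro u _
  rw [Finset.sum_mul]
  apply Finset.sum_congr rfl
  intro w _
  ring

lemma SIRaux_ae_sum {Ω : Type*} [MeasurableSpace Ω] (μ : MeasureTheory.Measure Ω)
    {ι : Type*} (s : Finset ι) (f g : ι → Ω → ℝ)
    (h : ∀ i ∈ s, f i =ᵐ[μ] g i) : (∑ i ∈ s, f i) =ᵐ[μ] ∑ i ∈ s, g i := by
  classical
  induction s using Finset.induction with
  | empty => simp
  | insert _ _ hx ih =>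
    rw [Finset.sum_insert hx, Finset.sum_insert hx]
    exact Filter.EventuallyEq.add (h _ (Finset.mem_insert_self _ _))
      (ih fun i hi => h i (Finset.mem_insert_of_mem hi))

lemma SIRaux_if_one {c : Prop} [Decidable c] (x y : ℝ) :
    (if (if c then (1 : ℕ) else 0) = 1 then x else y) = if c then x else y := by
  split_ifs <;> simp_all

end SIRaux


section SIRmain
open Finset MeasureTheory

variable {Ω : Type*}

/-- Event: the configuration of the indicators at step `k` is `(A, B)`. -/
def SIRaux_E (X Y : ℕ → ℕ → Ω → ℕ) (k N : ℕ) (A B : Finset ℕ) : Set Ω :=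
  {ω | ∀ i < N, X k i ω = (if i ∈ A then 1 else 0) ∧ Y k i ω = (if i ∈ B then 1 else 0)}

noncomputable def SIRaux_ind (X Y : ℕ → ℕ → Ω → ℕ) (k N : ℕ) (A B : Finset ℕ) : Ω → ℝ :=
  Set.indicator (SIRaux_E X Y k N A B) (fun _ => (1 : ℝ))

noncomputable def SIRaux_G (f : ℝ × ℝ → ℝ) (A B : Finset ℕ) (q : ℕ × ℕ) : ℝ :=
  f ((q.2 : ℝ) + ((A ∩ Finset.range q.1).card : ℝ) - ((B ∩ Finset.range q.2).card : ℝ),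
     (q.1 : ℝ) - ((A ∩ Finset.range q.1).card : ℝ))

noncomputable def SIRaux_g (S I : ℕ → Ω → ℕ) (k : ℕ) (f : ℝ × ℝ → ℝ) (A B : Finset ℕ) :
    Ω → ℝ :=
  fun ω => SIRaux_G f A B (S k ω, I k ω)

end SIRmain

/-- In the discrete stochastic SIR model, `(I_k, S_k)` is a homogeneous
Markov chain for the filtration `𝓕_k`: for every `k` and every bounded measurable
`f : ℝ × ℝ → ℝ`, almost surely
`𝔼[f(I_{k+1}, S_{k+1}) | 𝓕_k] = F_f(I_k, S_k)`, where
`F_f(l, m) = ∑_{u ≤ m} ∑_{w ≤ l} f(l + u - w, m - u) ℙ(Bin(m, 1 - e^{-λlh}) = u)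
  ℙ(Bin(l, 1 - e^{-γh}) = w)`;
in particular the conditional law of `(I_{k+1}, S_{k+1})` given `𝓕_k` is a fixed
(`k`-independent) function of `(I_k, S_k)`. -/
theorem sir_markov_property
    {Ω : Type*} [MeasurableSpace Ω] (μ : Measure Ω)
    (N : ℕ) (h lam gam : ℝ)
    (S I R : ℕ → Ω → ℕ) (X Y : ℕ → ℕ → Ω → ℕ)
    (hM : IsSIRModel μ N h lam gam S I R X Y) :
    ∀ k : ℕ, ∀ f : ℝ × ℝ → ℝ, Measurable f → (∃ C : ℝ, ∀ p, |f p| ≤ C) →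
      μ[fun ω => f ((I (k + 1) ω : ℝ), (S (k + 1) ω : ℝ)) | sirFiltration S I k]
        =ᵐ[μ] fun ω =>
          ∑ u ∈ Finset.range (S k ω + 1), ∑ w ∈ Finset.range (I k ω + 1),
            f ((I k ω : ℝ) + u - w, (S k ω : ℝ) - u)
              * binPMF (S k ω) (1 - Real.exp (-(lam * (I k ω : ℝ) * h))) u
              * binPMF (I k ω) (1 - Real.exp (-(gam * h))) w := by
  obtain ⟨hprob, hh, hlam, hgam, hsum, hX1, hY1, hSm, hIm, hRm, hXm, hYm, _hinit,
    hSrec, hIrec, hRrec, hcond⟩ := hM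
  haveI := hprob
  intro k f hfm hbdd
  obtain ⟨C, hC⟩ := hbdd
  classical
  have hC0 : 0 ≤ C := le_trans (abs_nonneg _) (hC (0, 0))
  -- measurability of the pair (S k, I k) w.r.t. the filtration
  have hpair_m : Measurable[sirFiltration S I k] (fun ω => (S k ω, I k ω)) := by
    have h1 : Measurable[MeasurableSpace.comap (fun ω => (S k ω, I k ω)) inferInstance]
        (fun ω => (S k ω, I k ω)) := Measurable.of_comap_le le_rfl
    refine h1.mono ?_ le_rfl
    exact le_iSup₂ (f := fun j (_ : j ∈ Finset.range (k + 1)) =>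
      MeasurableSpace.comap (fun ω => (S j ω, I j ω)) inferInstance) k
      (Finset.self_mem_range_succ k)
  have hpair : Measurable (fun ω => (S k ω, I k ω)) := (hSm k).prodMk (hIm k)
  set P := (Finset.range N).powerset with hPdef
  -- measurability of the configuration events
  have hE : ∀ A B : Finset ℕ, MeasurableSet (SIRaux_E X Y k N A B) := by
    intro A B
    have hset : SIRaux_E X Y k N A B = ⋂ (i : ℕ) (_ : i < N),
        ((X k i ⁻¹' {if i ∈ A then 1 else 0}) ∩ (Y k i ⁻¹' {if i ∈ B then 1 else 0})) := by
      ext ω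
      simp [SIRaux_E, Set.mem_iInter, Set.mem_preimage]
    rw [hset]
    exact MeasurableSet.iInter fun i => MeasurableSet.iInter fun _ =>
      (hXm k i (measurableSet_singleton _)).inter (hYm k i (measurableSet_singleton _))
  have hind01 : ∀ A B (ω : Ω), SIRaux_ind X Y k N A B ω = 0 ∨ SIRaux_ind X Y k N A B ω = 1 := by
    intro A B ω
    by_cases hω : ω ∈ SIRaux_E X Y k N A B
    · right; simp [SIRaux_ind, Set.indicator_of_mem hω]
    · left; simp [SIRaux_ind, Set.indicator_of_notMem hω]
  have hind_meas : ∀ A B : Finset ℕ, Measurable (SIRaux_ind X Y k N A B) :=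
    fun A B => measurable_const.indicator (hE A B)
  have hind_int : ∀ A B : Finset ℕ, Integrable (SIRaux_ind X Y k N A B) μ := by
    intro A B
    refine (integrable_const (1 : ℝ)).mono' (hind_meas A B).aestronglyMeasurable ?_
    filter_upwards with ω
    rcases hind01 A B ω with h0 | h1 <;> simp [*]
  have hterm_meas : ∀ A B : Finset ℕ,
      Measurable (fun ω => SIRaux_g S I k f A B ω * SIRaux_ind X Y k N A B ω) := by
    intro A B
    exact ((measurable_of_countable (SIRaux_G f A B)).comp hpair).mul (hind_meas A B)
  have hterm_int : ∀ A B : Finset ℕ,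
      Integrable (fun ω => SIRaux_g S I k f A B ω * SIRaux_ind X Y k N A B ω) μ := by
    intro A B
    refine (integrable_const C).mono' (hterm_meas A B).aestronglyMeasurable ?_
    filter_upwards with ω
    rcases hind01 A B ω with h0 | h1
    · simp [h0, hC0]
    · rw [h1, mul_one, Real.norm_eq_abs]
      exact hC _
  -- pointwise decomposition
  have hdecomp : (fun ω => f ((I (k + 1) ω : ℝ), (S (k + 1) ω : ℝ)))
      = fun ω => ∑ AB ∈ P ×ˢ P,
          SIRaux_g S I k f AB.1 AB.2 ω * SIRaux_ind X Y k N AB.1 AB.2 ω := by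
    funext ω
    have hsN : S k ω ≤ N := by have := hsum k ω; omega
    have hlN : I k ω ≤ N := by have := hsum k ω; omega
    set A0 := (Finset.range N).filter (fun i => X k i ω = 1) with hA0def
    set B0 := (Finset.range N).filter (fun i => Y k i ω = 1) with hB0def
    have hmem : (A0, B0) ∈ P ×ˢ P := by
      simp only [hPdef, Finset.mem_product, Finset.mem_powerset]
      exact ⟨Finset.filter_subset _ _, Finset.filter_subset _ _⟩
    rw [Finset.sum_eq_single_of_mem (A0, B0) hmem ?other]
    case other =>
      rintro ⟨A, B⟩ hAB hne
      have hnot : ω ∉ SIRaux_E X Y k N A B := by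
        intro hω
        apply hne
        have hAsub : A ⊆ Finset.range N := by
          have := (Finset.mem_product.mp hAB).1
          simpa [hPdef, Finset.mem_powerset] using this
        have hBsub : B ⊆ Finset.range N := by
          have := (Finset.mem_product.mp hAB).2
          simpa [hPdef, Finset.mem_powerset] using this
        have hA : A = A0 := by
          ext i
          simp only [hA0def, Finset.mem_filter, Finset.mem_range]
          constructor
          · intro hiA
            have hiN : i < N := Finset.mem_range.mp (hAsub hiA)
            have hx := (hω i hiN).1
            rw [if_pos hiA] at hx
            exact ⟨hiN, hx⟩
          · rintro ⟨hiN, hXi⟩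
            have hx := (hω i hiN).1
            by_contra hiA
            rw [if_neg hiA] at hx
            omega
        have hB : B = B0 := by
          ext i
          simp only [hB0def, Finset.mem_filter, Finset.mem_range]
          constructor
          · intro hiB
            have hiN : i < N := Finset.mem_range.mp (hBsub hiB)
            have hy := (hω i hiN).2
            rw [if_pos hiB] at hy
            exact ⟨hiN, hy⟩
          · rintro ⟨hiN, hYi⟩
            have hy := (hω i hiN).2
            by_contra hiB
            rw [if_neg hiB] at hy
            omega
        rw [hA, hB]
      simp [SIRaux_ind, Set.indicator_of_notMem hnot]
    · -- the surviving term
      have hωE : ω ∈ SIRaux_E X Y k N A0 B0 := by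
        intro i hiN
        constructor
        · rcases Nat.le_one_iff_eq_zero_or_eq_one.mp (hX1 k i ω) with h0 | h1
          · simp [hA0def, Finset.mem_filter, Finset.mem_range, hiN, h0]
          · simp [hA0def, Finset.mem_filter, Finset.mem_range, hiN, h1]
        · rcases Nat.le_one_iff_eq_zero_or_eq_one.mp (hY1 k i ω) with h0 | h1
          · simp [hB0def, Finset.mem_filter, Finset.mem_range, hiN, h0]
          · simp [hB0def, Finset.mem_filter, Finset.mem_range, hiN, h1]
      rw [show SIRaux_ind X Y k N A0 B0 ω = 1 from Set.indicator_of_mem hωE _, mul_one]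
      have hcardA : (A0 ∩ Finset.range (S k ω)).card = ∑ i ∈ Finset.range (S k ω), X k i ω := by
        have hset : A0 ∩ Finset.range (S k ω)
            = (Finset.range (S k ω)).filter (fun i => X k i ω = 1) := by
          ext i
          simp only [hA0def, Finset.mem_inter, Finset.mem_filter, Finset.mem_range]
          constructor
          · rintro ⟨⟨hiN, hXi⟩, his⟩; exact ⟨his, hXi⟩
          · rintro ⟨his, hXi⟩; exact ⟨⟨lt_of_lt_of_le his hsN, hXi⟩, his⟩
        rw [hset, Finset.card_filter]
        refine Finset.sum_congr rfl fun i _ => ?_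
        rcases Nat.le_one_iff_eq_zero_or_eq_one.mp (hX1 k i ω) with h0 | h1 <;> simp [*]
      have hcardB : (B0 ∩ Finset.range (I k ω)).card = ∑ i ∈ Finset.range (I k ω), Y k i ω := by
        have hset : B0 ∩ Finset.range (I k ω)
            = (Finset.range (I k ω)).filter (fun i => Y k i ω = 1) := by
          ext i
          simp only [hB0def, Finset.mem_inter, Finset.mem_filter, Finset.mem_range]
          constructor
          · rintro ⟨⟨hiN, hYi⟩, his⟩; exact ⟨his, hYi⟩
          · rintro ⟨his, hYi⟩; exact ⟨⟨lt_of_lt_of_le his hlN, hYi⟩, his⟩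
        rw [hset, Finset.card_filter]
        refine Finset.sum_congr rfl fun i _ => ?_
        rcases Nat.le_one_iff_eq_zero_or_eq_one.mp (hY1 k i ω) with h0 | h1 <;> simp [*]
      have e1 : (S (k + 1) ω : ℝ)
          = (S k ω : ℝ) - ((A0 ∩ Finset.range (S k ω)).card : ℝ) := by
        have hc := congrArg (Nat.cast : ℕ → ℝ) (hSrec k ω)
        push_cast at hc
        rw [hcardA]
        push_cast
        linarith
      have e2 : (I (k + 1) ω : ℝ)
          = (I k ω : ℝ) + ((A0 ∩ Finset.range (S k ω)).card : ℝ)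
              - ((B0 ∩ Finset.range (I k ω)).card : ℝ) := by
        have hc := congrArg (Nat.cast : ℕ → ℝ) (hIrec k ω)
        push_cast at hc
        rw [hcardA, hcardB]
        push_cast
        linarith
      simp only [SIRaux_g, SIRaux_G]
      rw [e1, e2]
  -- conditional expectation computation
  have hint : ∀ AB ∈ P ×ˢ P,
      Integrable (fun ω => SIRaux_g S I k f AB.1 AB.2 ω * SIRaux_ind X Y k N AB.1 AB.2 ω) μ :=
    fun AB _ => hterm_int AB.1 AB.2
  have hsum_fun : (fun ω => ∑ AB ∈ P ×ˢ P,
        SIRaux_g S I k f AB.1 AB.2 ω * SIRaux_ind X Y k N AB.1 AB.2 ω)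
      = ∑ AB ∈ P ×ˢ P,
          fun ω => SIRaux_g S I k f AB.1 AB.2 ω * SIRaux_ind X Y k N AB.1 AB.2 ω := by
    funext ω
    simp [Finset.sum_apply]
  have step1 : μ[fun ω => f ((I (k + 1) ω : ℝ), (S (k + 1) ω : ℝ))|sirFiltration S I k]
      =ᵐ[μ] ∑ AB ∈ P ×ˢ P,
        μ[fun ω => SIRaux_g S I k f AB.1 AB.2 ω * SIRaux_ind X Y k N AB.1 AB.2 ω|sirFiltration S I k] := by
    rw [hdecomp, hsum_fun]
    exact condExp_finset_sum hint _
  have step2 : ∀ AB ∈ P ×ˢ P,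
      μ[fun ω => SIRaux_g S I k f AB.1 AB.2 ω * SIRaux_ind X Y k N AB.1 AB.2 ω|sirFiltration S I k]
        =ᵐ[μ] fun ω => SIRaux_g S I k f AB.1 AB.2 ω *
          ((∏ i ∈ Finset.range N, if i ∈ AB.1 then 1 - Real.exp (-(lam * (I k ω : ℝ) * h))
              else Real.exp (-(lam * (I k ω : ℝ) * h))) *
           (∏ i ∈ Finset.range N, if i ∈ AB.2 then 1 - Real.exp (-(gam * h))
              else Real.exp (-(gam * h)))) := by
    rintro ⟨A, B⟩ hAB
    have hsm : StronglyMeasurable[sirFiltration S I k] (SIRaux_g S I k f A B) :=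
      ((measurable_of_countable (SIRaux_G f A B)).comp hpair_m).stronglyMeasurable
    have hmul := condExp_mul_of_stronglyMeasurable_left (m := sirFiltration S I k) (μ := μ) hsm
      (hterm_int A B) (hind_int A B)
    have hcd := hcond k (fun i => if i ∈ A then 1 else 0) (fun i => if i ∈ B then 1 else 0)
      (fun i => by split_ifs <;> simp) (fun i => by split_ifs <;> simp)
    simp only [SIRaux_if_one] at hcd
    refine hmul.trans ?_
    have hcd' : μ[SIRaux_ind X Y k N A B|sirFiltration S I k] =ᵐ[μ] fun ω =>
        (∏ i ∈ Finset.range N, if i ∈ A then 1 - Real.exp (-(lam * (I k ω : ℝ) * h))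
            else Real.exp (-(lam * (I k ω : ℝ) * h))) *
        (∏ i ∈ Finset.range N, if i ∈ B then 1 - Real.exp (-(gam * h))
            else Real.exp (-(gam * h))) := hcd
    filter_upwards [hcd'] with ω hω
    simp only [Pi.mul_apply]
    rw [hω]
  refine step1.trans ((SIRaux_ae_sum μ _ _ _ step2).trans ?_)
  refine Filter.EventuallyEq.of_eq ?_
  funext ω
  have hsN : S k ω ≤ N := by have := hsum k ω; omega
  have hlN : I k ω ≤ N := by have := hsum k ω; omega
  have hdk := SIRaux_double_key N (S k ω) (I k ω) hsN hlN
    (1 - Real.exp (-(lam * (I k ω : ℝ) * h))) (1 - Real.exp (-(gam * h))) f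
  simp only [sub_sub_cancel] at hdk
  rw [Finset.sum_apply, Finset.sum_product]
  simp only [SIRaux_g, SIRaux_G]
  exact hdk
end
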